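/- arXiv:2111.14284 — 3 statements merged into one kernel-verified Lean document; each statement's English description precedes it below -/
import Mathlib

section
/- Let n ≥ 3 be an integer, let G be an {F^(1)_n, F^(2)_n, F^(3)_n, F^(4)_n}-free graph, let Q = v_1 v_2 ⋯ v_l be an induced path of G, and let y, y' be distinct vertices each having at least one neighbor on Q, with (N_G(y) ∪ N_G(y')) ∩ V(Q) ⊆ {v_i : n+1 ≤ i ≤ l−n}. Setting i_z = min{i : z v_i ∈ E(G)} for z ∈ {y,y'}: if i_y = i_{y'}, then yy' ∈ E(G). -/
/-! ## Basic notions for graphs and digraphs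

A digraph on a vertex type `V` is given by its arc relation `E : V → V → Prop`.
Simplicity and absence of 2-cycles is expressed by the hypothesis
`∀ u v, E u v → ¬ E v u`.  The underlying graph `G_D` is `SimpleGraph.fromRel E`. -/

/-- `G` contains an induced copy of the simple graph `H`. -/
def HasInducedCopyG {W V : Type} (H : SimpleGraph W) (G : SimpleGraph V) : Prop :=
  ∃ f : W → V, Function.Injective f ∧ ∀ a b : W, G.Adj (f a) (f b) ↔ H.Adj a b

/-- The digraph `E` contains an induced copy of the digraph `H`. -/
def DigraphHasInducedCopy {W V : Type} (H : W → W → Prop) (E : V → V → Prop) : Prop :=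
  ∃ f : W → V, Function.Injective f ∧ ∀ a b : W, E (f a) (f b) ↔ H a b

/-- The star `K_{1,n}` with one center and `n` leaves. -/
def StarG (n : ℕ) : SimpleGraph (Unit ⊕ Fin n) :=
  SimpleGraph.fromRel (fun a b =>
    match a, b with
    | Sum.inl _, Sum.inr _ => True
    | _, _ => False)

/-- The path `P_n` of order `n`. -/
def PathG (n : ℕ) : SimpleGraph (Fin n) :=
  SimpleGraph.fromRel (fun i j => i.val + 1 = j.val)

/-- The graph `K*_n`: a complete graph on the `x_i` together with pendant edges `x_i y_i`. -/
def KStarG (n : ℕ) : SimpleGraph (Fin n ⊕ Fin n) :=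
  SimpleGraph.fromRel (fun a b =>
    match a, b with
    | Sum.inl i, Sum.inl j => i ≠ j
    | Sum.inl i, Sum.inr j => i = j
    | _, _ => False)

/-- The graph `F^(1)_n` on `{x₁,x₂} ∪ {yᵢ} ∪ {zᵢ}`:
edges `x₁x₂, x₁y₁, x₁z₁` together with the two paths `y₁⋯y_n` and `z₁⋯z_n`. -/
def F1G (n : ℕ) : SimpleGraph (Fin 2 ⊕ Fin n ⊕ Fin n) :=
  SimpleGraph.fromRel (fun a b =>
    match a, b with
    | Sum.inl i, Sum.inl j => i.val = 0 ∧ j.val = 1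
    | Sum.inl i, Sum.inr (Sum.inl j) => i.val = 0 ∧ j.val = 0
    | Sum.inl i, Sum.inr (Sum.inr j) => i.val = 0 ∧ j.val = 0
    | Sum.inr (Sum.inl i), Sum.inr (Sum.inl j) => i.val + 1 = j.val
    | Sum.inr (Sum.inr i), Sum.inr (Sum.inr j) => i.val + 1 = j.val
    | _, _ => False)

/-- The single edge `y₁z₁` (used to build `F^(2)_n` and `F^(4)_n`). -/
def YZEdgeG (n : ℕ) : SimpleGraph (Fin 2 ⊕ Fin n ⊕ Fin n) :=
  SimpleGraph.fromRel (fun a b =>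
    match a, b with
    | Sum.inr (Sum.inl i), Sum.inr (Sum.inr j) => i.val = 0 ∧ j.val = 0
    | _, _ => False)

/-- `F^(2)_n = F^(1)_n + y₁z₁`. -/
def F2G (n : ℕ) : SimpleGraph (Fin 2 ⊕ Fin n ⊕ Fin n) := F1G n ⊔ YZEdgeG n

/-- The graph `F^(3)_n`: edges `x₁y₁, x₁z₁, x₂y₁, x₂z₁` together with the two paths. -/
def F3G (n : ℕ) : SimpleGraph (Fin 2 ⊕ Fin n ⊕ Fin n) :=
  SimpleGraph.fromRel (fun a b =>
    match a, b with
    | Sum.inl _, Sum.inr (Sum.inl j) => j.val = 0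
    | Sum.inl _, Sum.inr (Sum.inr j) => j.val = 0
    | Sum.inr (Sum.inl i), Sum.inr (Sum.inl j) => i.val + 1 = j.val
    | Sum.inr (Sum.inr i), Sum.inr (Sum.inr j) => i.val + 1 = j.val
    | _, _ => False)

/-- `F^(4)_n = F^(3)_n + y₁z₁`. -/
def F4G (n : ℕ) : SimpleGraph (Fin 2 ⊕ Fin n ⊕ Fin n) := F3G n ⊔ YZEdgeG n

/-- The digraph `D^(1)_n` on `{x₁} ∪ {yᵢ} ∪ {zᵢ}` with arcs
`(x₁,y₁), (z₁,x₁), (y₁,z₁)`, `(y_{i+1}, y_i)` and `(z_i, z_{i+1})`. -/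
def D1Rel (n : ℕ) : (Unit ⊕ Fin n ⊕ Fin n) → (Unit ⊕ Fin n ⊕ Fin n) → Prop := fun a b =>
  match a, b with
  | Sum.inl _, Sum.inr (Sum.inl j) => j.val = 0
  | Sum.inr (Sum.inr i), Sum.inl _ => i.val = 0
  | Sum.inr (Sum.inl i), Sum.inr (Sum.inr j) => i.val = 0 ∧ j.val = 0
  | Sum.inr (Sum.inl i), Sum.inr (Sum.inl j) => j.val + 1 = i.val
  | Sum.inr (Sum.inr i), Sum.inr (Sum.inr j) => i.val + 1 = j.val
  | _, _ => False

/-- `D^(2)_n`: obtained from `D^(1)_n` by replacing the arc `(z₁,x₁)` by `(x₁,z₁)`. -/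
def D2Rel (n : ℕ) : (Unit ⊕ Fin n ⊕ Fin n) → (Unit ⊕ Fin n ⊕ Fin n) → Prop := fun a b =>
  match a, b with
  | Sum.inl _, Sum.inr (Sum.inl j) => j.val = 0
  | Sum.inl _, Sum.inr (Sum.inr j) => j.val = 0
  | Sum.inr (Sum.inl i), Sum.inr (Sum.inr j) => i.val = 0 ∧ j.val = 0
  | Sum.inr (Sum.inl i), Sum.inr (Sum.inl j) => j.val + 1 = i.val
  | Sum.inr (Sum.inr i), Sum.inr (Sum.inr j) => i.val + 1 = j.val
  | _, _ => False

/-- `D^(3)_n`: obtained from `D^(1)_n` by replacing the arc `(x₁,y₁)` by `(y₁,x₁)`. -/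
def D3Rel (n : ℕ) : (Unit ⊕ Fin n ⊕ Fin n) → (Unit ⊕ Fin n ⊕ Fin n) → Prop := fun a b =>
  match a, b with
  | Sum.inr (Sum.inl i), Sum.inl _ => i.val = 0
  | Sum.inr (Sum.inr i), Sum.inl _ => i.val = 0
  | Sum.inr (Sum.inl i), Sum.inr (Sum.inr j) => i.val = 0 ∧ j.val = 0
  | Sum.inr (Sum.inl i), Sum.inr (Sum.inl j) => j.val + 1 = i.val
  | Sum.inr (Sum.inr i), Sum.inr (Sum.inr j) => i.val + 1 = j.val
  | _, _ => False

/-- The transitive tournament `T_n`. -/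
def TRel (n : ℕ) : Fin n → Fin n → Prop := fun i j => i < j

/-- A (nonempty) directed path in the digraph `E`, recorded as its list of vertices. -/
def IsDirPathList {V : Type} (E : V → V → Prop) (l : List V) : Prop :=
  l ≠ [] ∧ l.Nodup ∧ l.Chain' E

/-- The path cover number of the subdigraph of `E` induced by `X`:
the minimum number of directed paths of `E[X]` whose vertex sets cover `X`. -/
noncomputable def pcOn {V : Type} (E : V → V → Prop) (X : Set V) : ℕ :=
  sInf {k | ∃ P : Finset (List V), P.card = k ∧
    (∀ l ∈ P, IsDirPathList E l ∧ ∀ v ∈ l, v ∈ X) ∧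
    ∀ v ∈ X, ∃ l ∈ P, v ∈ l}

/-- The path partition number of the subdigraph of `E` induced by `X`:
the minimum number of pairwise vertex-disjoint directed paths of `E[X]`
whose vertex sets partition `X`. -/
noncomputable def ppOn {V : Type} (E : V → V → Prop) (X : Set V) : ℕ :=
  sInf {k | ∃ P : Finset (List V), P.card = k ∧
    (∀ l ∈ P, IsDirPathList E l ∧ ∀ v ∈ l, v ∈ X) ∧
    (∀ v ∈ X, ∃ l ∈ P, v ∈ l) ∧
    ∀ l ∈ P, ∀ l' ∈ P, l ≠ l' → ∀ v ∈ l, v ∉ l'}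

/-- A (nonempty) path in the simple graph `G`, recorded as its list of vertices. -/
def IsPathList {V : Type} (G : SimpleGraph V) (l : List V) : Prop :=
  l ≠ [] ∧ l.Nodup ∧ l.Chain' G.Adj

/-- The path cover number `pc(G)` of a simple graph `G`. -/
noncomputable def pcG {V : Type} (G : SimpleGraph V) : ℕ :=
  sInf {k | ∃ P : Finset (List V), P.card = k ∧
    (∀ l ∈ P, IsPathList G l) ∧ ∀ v : V, ∃ l ∈ P, v ∈ l}

/-- The path partition number `pp(G)` of a simple graph `G`. -/
noncomputable def ppG {V : Type} (G : SimpleGraph V) : ℕ :=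
  sInf {k | ∃ P : Finset (List V), P.card = k ∧
    (∀ l ∈ P, IsPathList G l) ∧ (∀ v : V, ∃ l ∈ P, v ∈ l) ∧
    ∀ l ∈ P, ∀ l' ∈ P, l ≠ l' → ∀ v ∈ l, v ∉ l'}

/-- A directed cycle in the digraph `E`, recorded as its list of vertices. -/
def IsDirCycleList {V : Type} (E : V → V → Prop) (l : List V) : Prop :=
  ∃ h : l ≠ [], 3 ≤ l.length ∧ l.Nodup ∧ l.Chain' E ∧ E (l.getLast h) (l.head h)

/-- A member of a cycle cover/partition: a directed cycle, or a weakly connected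
subdigraph of order at most two. -/
def IsCyclePartMember {V : Type} (E : V → V → Prop) (l : List V) : Prop :=
  IsDirCycleList E l ∨
    (l ≠ [] ∧ l.length ≤ 2 ∧ l.Nodup ∧ l.Chain' (fun a b => E a b ∨ E b a))

/-- The cycle partition number `cp(D)` of the digraph `E`. -/
noncomputable def cpNum {V : Type} (E : V → V → Prop) : ℕ :=
  sInf {k | ∃ P : Finset (List V), P.card = k ∧
    (∀ l ∈ P, IsCyclePartMember E l) ∧
    (∀ v : V, ∃ l ∈ P, v ∈ l) ∧
    ∀ l ∈ P, ∀ l' ∈ P, l ≠ l' → ∀ v ∈ l, v ∉ l'}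

/-- `v : Fin m → V` enumerates an induced path of the simple graph `G`. -/
def IsInducedPathEmb {V : Type} (G : SimpleGraph V) {m : ℕ} (v : Fin m → V) : Prop :=
  Function.Injective v ∧
    ∀ i j : Fin m, G.Adj (v i) (v j) ↔ (i.val + 1 = j.val ∨ j.val + 1 = i.val)

/-- `w : Fin m → V` enumerates an induced pseudo-path of the digraph `E`:
the induced subdigraph on its image has a path as underlying graph. -/
def IsInducedPsPath {V : Type} (E : V → V → Prop) {m : ℕ} (w : Fin m → V) : Prop :=
  Function.Injective w ∧
    ∀ i j : Fin m, (E (w i) (w j) ∨ E (w j) (w i)) ↔ (i.val + 1 = j.val ∨ j.val + 1 = i.val)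

/-- `r(P)` for a pseudo-path enumerated by `w`: the number of (internal) vertices
having out-degree 2 or in-degree 2 in the pseudo-path. -/
noncomputable def turnCount {V : Type} (E : V → V → Prop) {m : ℕ} (w : Fin m → V) : ℕ :=
  Set.ncard {i : Fin m | ∃ j k : Fin m, j.val + 1 = i.val ∧ i.val + 1 = k.val ∧
    ((E (w i) (w j) ∧ E (w i) (w k)) ∨ (E (w j) (w i) ∧ E (w k) (w i)))}

/-- Condition (D1): the underlying graph of `E` is `{K*_n, K_{1,n}, F^(1)_n, F^(2)_n}`-free. -/
def CondD1 {V : Type} (n : ℕ) (E : V → V → Prop) : Prop :=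
  ¬ HasInducedCopyG (KStarG n) (SimpleGraph.fromRel E) ∧
  ¬ HasInducedCopyG (StarG n) (SimpleGraph.fromRel E) ∧
  ¬ HasInducedCopyG (F1G n) (SimpleGraph.fromRel E) ∧
  ¬ HasInducedCopyG (F2G n) (SimpleGraph.fromRel E)

/-- Condition (D'1): the underlying graph of `E` is
`{K*_n, K_{1,n}, F^(1)_n, F^(2)_n, F^(3)_n, F^(4)_n}`-free. -/
def CondD1' {V : Type} (n : ℕ) (E : V → V → Prop) : Prop :=
  CondD1 n E ∧
  ¬ HasInducedCopyG (F3G n) (SimpleGraph.fromRel E) ∧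
  ¬ HasInducedCopyG (F4G n) (SimpleGraph.fromRel E)

/-- Condition (D2): `E` is `{D^(1)_n, D^(2)_n, D^(3)_n}`-free. -/
def CondD2 {V : Type} (n : ℕ) (E : V → V → Prop) : Prop :=
  ¬ DigraphHasInducedCopy (D1Rel n) E ∧
  ¬ DigraphHasInducedCopy (D2Rel n) E ∧
  ¬ DigraphHasInducedCopy (D3Rel n) E

/-- Condition (D3): `r(P) ≤ n` for every induced pseudo-path `P` of `E`. -/
def CondD3 {V : Type} (n : ℕ) (E : V → V → Prop) : Prop :=
  ∀ (m : ℕ) (w : Fin m → V), IsInducedPsPath E w → turnCount E w ≤ n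

/-- The Ramsey number `R(a, b)`: the least `R` such that every graph on at least `R`
vertices contains a clique of size `a` or an independent set of size `b`. -/
noncomputable def ramseyNumber (a b : ℕ) : ℕ :=
  sInf {R | ∀ m : ℕ, R ≤ m → ∀ G : SimpleGraph (Fin m),
    (∃ s : Finset (Fin m), G.IsNClique a s) ∨ (∃ s : Finset (Fin m), Gᶜ.IsNClique b s)}

/-- The independence number of the subgraph of `G` induced by `X`. -/
noncomputable def indepNumOn {V : Type} (G : SimpleGraph V) (X : Set V) : ℕ :=
  sSup {k | ∃ s : Finset V, ↑s ⊆ X ∧ s.card = k ∧ ∀ a ∈ s, ∀ b ∈ s, a ≠ b → ¬ G.Adj a b}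

/-- The independence number `α(G)`. -/
noncomputable def indepNum {V : Type} (G : SimpleGraph V) : ℕ := indepNumOn G Set.univ

/-- The neighborhood `N_G(X)` of a set of vertices. -/
def nbhd {V : Type} (G : SimpleGraph V) (X : Set V) : Set V :=
  {v | v ∉ X ∧ ∃ x ∈ X, G.Adj v x}
set_option maxHeartbeats 1600000 in
lemma pendantF1 {V : Type} {n l : ℕ} (hn : 3 ≤ n) (G : SimpleGraph V)
    (v : Fin l → V) (hinj : Function.Injective v)
    (hvv : ∀ i j : Fin l, G.Adj (v i) (v j) ↔ (i.val + 1 = j.val ∨ j.val + 1 = i.val))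
    (w : V) (hw : ∀ i : Fin l, w ≠ v i)
    (a : Fin l) (hadj : G.Adj w (v a))
    (honly : ∀ i : Fin l, G.Adj w (v i) → i = a)
    (hlo : n ≤ a.val) (hhi : a.val + n + 1 ≤ l) :
    HasInducedCopyG (F1G n) G := by
  have hal : a.val < l := a.isLt
  have hwv : ∀ i : Fin l, G.Adj w (v i) ↔ i = a := fun i => ⟨honly i, fun h => h ▸ hadj⟩
  refine ⟨fun p => match p with
    | Sum.inl i => if i.val = 0 then v a else w
    | Sum.inr (Sum.inl k) => v ⟨a.val - 1 - k.val, by omega⟩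
    | Sum.inr (Sum.inr k) => v ⟨a.val + 1 + k.val, by have := k.isLt; omega⟩, ?_, ?_⟩
  · intro p q h
    rcases p with i|k|k <;> rcases q with j|k'|k'
    all_goals try fin_cases i
    all_goals try fin_cases j
    all_goals simp only at h
    all_goals (try have hk := k.isLt); all_goals (try have hk' := k'.isLt)
    all_goals simp_all
    all_goals first
      | exact hw a h.symm
      | exact hw _ h.symm
      | exact hw _ h
      | (have h2 := congrArg Fin.val (hinj h); simp at h2; omega)
      | (have h2 := congrArg Fin.val (hinj h); simp at h2; exact Fin.ext (by omega))
  · intro p q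
    rcases p with i|k|k <;> rcases q with j|k'|k'
    · fin_cases i <;> fin_cases j <;>
        simp [F1G, SimpleGraph.fromRel_adj, G.irrefl, hadj, hadj.symm, hw a, (hw a).symm]
    · fin_cases i <;>
        simp [F1G, SimpleGraph.fromRel_adj, hvv, hwv, Fin.ext_iff, -Fin.val_eq_zero_iff] <;>
        (have := k'.isLt; omega)
    · fin_cases i <;>
        simp [F1G, SimpleGraph.fromRel_adj, hvv, hwv, Fin.ext_iff, -Fin.val_eq_zero_iff] <;>
        (have := k'.isLt; omega)
    · fin_cases j <;>
        simp [F1G, SimpleGraph.fromRel_adj, hvv, hwv, Fin.ext_iff, -Fin.val_eq_zero_iff, G.adj_comm _ w] <;>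
        (have := k.isLt; omega)
    · simp [F1G, SimpleGraph.fromRel_adj, hvv, Fin.ext_iff, -Fin.val_eq_zero_iff]
      have := k.isLt; have := k'.isLt; omega
    · simp [F1G, SimpleGraph.fromRel_adj, hvv]
      have := k.isLt; have := k'.isLt; omega
    · fin_cases j <;>
        simp [F1G, SimpleGraph.fromRel_adj, hvv, hwv, Fin.ext_iff, -Fin.val_eq_zero_iff, G.adj_comm _ w] <;>
        (have := k.isLt; omega)
    · simp [F1G, SimpleGraph.fromRel_adj, hvv]
      have := k.isLt; have := k'.isLt; omega
    · simp [F1G, SimpleGraph.fromRel_adj, hvv, Fin.ext_iff, -Fin.val_eq_zero_iff]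
      have := k.isLt; have := k'.isLt; omega

set_option maxHeartbeats 1600000 in
lemma caseAF34 {V : Type} {n l : ℕ} (hn : 3 ≤ n) (G : SimpleGraph V)
    (v : Fin l → V) (hinj : Function.Injective v)
    (hvv : ∀ i j : Fin l, G.Adj (v i) (v j) ↔ (i.val + 1 = j.val ∨ j.val + 1 = i.val))
    (y y' : V) (hne : y ≠ y') (hnadj : ¬ G.Adj y y')
    (hwy : ∀ i : Fin l, y ≠ v i) (hwy' : ∀ i : Fin l, y' ≠ v i)
    (a b : Fin l) (hab : a.val < b.val)
    (hya : G.Adj y (v a)) (hy'a : G.Adj y' (v a))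
    (hyb : G.Adj y (v b)) (hy'b : G.Adj y' (v b))
    (hminy : ∀ i : Fin l, G.Adj y (v i) → a.val ≤ i.val)
    (hminy' : ∀ i : Fin l, G.Adj y' (v i) → a.val ≤ i.val)
    (hmaxy : ∀ i : Fin l, G.Adj y (v i) → i.val ≤ b.val)
    (hmaxy' : ∀ i : Fin l, G.Adj y' (v i) → i.val ≤ b.val)
    (hlo : n ≤ a.val) (hhi : b.val + n ≤ l) :
    HasInducedCopyG (F3G n) G ∨ HasInducedCopyG (F4G n) G := by
  have hal : a.val < l := a.isLt
  have hYy : ∀ (m : ℕ) (hm : m < l), m ≤ a.val → (G.Adj y (v ⟨m, hm⟩) ↔ m = a.val) := by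
    intro m hm hma
    constructor
    · intro h; exact le_antisymm hma (hminy _ h)
    · intro h; have he : (⟨m, hm⟩ : Fin l) = a := Fin.ext h; rw [he]; exact hya
  have hYy' : ∀ (m : ℕ) (hm : m < l), m ≤ a.val → (G.Adj y' (v ⟨m, hm⟩) ↔ m = a.val) := by
    intro m hm hma
    constructor
    · intro h; exact le_antisymm hma (hminy' _ h)
    · intro h; have he : (⟨m, hm⟩ : Fin l) = a := Fin.ext h; rw [he]; exact hy'a
  have hZy : ∀ (m : ℕ) (hm : m < l), b.val ≤ m → (G.Adj y (v ⟨m, hm⟩) ↔ m = b.val) := by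
    intro m hm hmb
    constructor
    · intro h; exact le_antisymm (hmaxy _ h) hmb
    · intro h; have he : (⟨m, hm⟩ : Fin l) = b := Fin.ext h; rw [he]; exact hyb
  have hZy' : ∀ (m : ℕ) (hm : m < l), b.val ≤ m → (G.Adj y' (v ⟨m, hm⟩) ↔ m = b.val) := by
    intro m hm hmb
    constructor
    · intro h; exact le_antisymm (hmaxy' _ h) hmb
    · intro h; have he : (⟨m, hm⟩ : Fin l) = b := Fin.ext h; rw [he]; exact hy'b
  by_cases hba : b.val = a.val + 1
  · right
    refine ⟨fun p => match p with
      | Sum.inl i => if i.val = 0 then y else y'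
      | Sum.inr (Sum.inl k) => v ⟨a.val - k.val, by omega⟩
      | Sum.inr (Sum.inr k) => v ⟨b.val + k.val, by have := k.isLt; have := b.isLt; omega⟩, ?_, ?_⟩
    case' _ =>
      intro p q h
      rcases p with i|k|k <;> rcases q with j|k'|k'
      all_goals try fin_cases i
      all_goals try fin_cases j
      all_goals simp only at h
      all_goals (try have hk := k.isLt); all_goals (try have hk' := k'.isLt)
      all_goals simp_all
      all_goals first
        | exact hwy _ h
        | exact hwy _ h.symm
        | exact hwy' _ h
        | exact hwy' _ h.symm
        | exact hne h
        | exact hne h.symm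
        | (have h2 := congrArg Fin.val (hinj h); simp at h2; omega)
        | (have h2 := congrArg Fin.val (hinj h); simp at h2; exact Fin.ext (by omega))

    intro p q
    rcases p with i|k|k <;> rcases q with j|k'|k'
    · fin_cases i <;> fin_cases j <;>
        simp [F4G, F3G, YZEdgeG, SimpleGraph.fromRel_adj, SimpleGraph.irrefl] <;>
        first | exact hnadj | exact fun h => hnadj h.symm
    · have hk' := k'.isLt
      fin_cases i <;> simp only [Fin.val_zero, Fin.val_one, Nat.one_ne_zero, if_true, if_false, ite_true, ite_false]
      · rw [hYy (a.val - k'.val) (by omega) (by omega)]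
        simp [F4G, F3G, YZEdgeG, SimpleGraph.fromRel_adj]
        all_goals omega
      · rw [hYy' (a.val - k'.val) (by omega) (by omega)]
        simp [F4G, F3G, YZEdgeG, SimpleGraph.fromRel_adj]
        all_goals omega
    · have hk' := k'.isLt
      fin_cases i <;> simp only [Fin.val_zero, Fin.val_one, Nat.one_ne_zero, if_true, if_false, ite_true, ite_false]
      · rw [hZy (b.val + k'.val) (by omega) (by omega)]
        simp [F4G, F3G, YZEdgeG, SimpleGraph.fromRel_adj]
        all_goals omega
      · rw [hZy' (b.val + k'.val) (by omega) (by omega)]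
        simp [F4G, F3G, YZEdgeG, SimpleGraph.fromRel_adj]
        all_goals omega
    · have hk := k.isLt
      rw [G.adj_comm]
      fin_cases j <;> simp only [Fin.val_zero, Fin.val_one, Nat.one_ne_zero, if_true, if_false, ite_true, ite_false]
      · rw [hYy (a.val - k.val) (by omega) (by omega)]
        simp [F4G, F3G, YZEdgeG, SimpleGraph.fromRel_adj]
        all_goals omega
      · rw [hYy' (a.val - k.val) (by omega) (by omega)]
        simp [F4G, F3G, YZEdgeG, SimpleGraph.fromRel_adj]
        all_goals omega
    · have hk := k.isLt; have hk' := k'.isLt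
      simp only []
      rw [hvv]
      simp [F4G, F3G, YZEdgeG, SimpleGraph.fromRel_adj, Fin.ext_iff]
      all_goals omega
    · have hk := k.isLt; have hk' := k'.isLt
      simp only []
      rw [hvv]
      simp [F4G, F3G, YZEdgeG, SimpleGraph.fromRel_adj, Fin.ext_iff]
      all_goals omega
    · have hk := k.isLt
      rw [G.adj_comm]
      fin_cases j <;> simp only [Fin.val_zero, Fin.val_one, Nat.one_ne_zero, if_true, if_false, ite_true, ite_false]
      · rw [hZy (b.val + k.val) (by omega) (by omega)]
        simp [F4G, F3G, YZEdgeG, SimpleGraph.fromRel_adj]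
        all_goals omega
      · rw [hZy' (b.val + k.val) (by omega) (by omega)]
        simp [F4G, F3G, YZEdgeG, SimpleGraph.fromRel_adj]
        all_goals omega
    · have hk := k.isLt; have hk' := k'.isLt
      simp only []
      rw [hvv]
      simp [F4G, F3G, YZEdgeG, SimpleGraph.fromRel_adj, Fin.ext_iff]
      all_goals omega
    · have hk := k.isLt; have hk' := k'.isLt
      simp only []
      rw [hvv]
      simp [F4G, F3G, YZEdgeG, SimpleGraph.fromRel_adj, Fin.ext_iff]
      all_goals omega

  · left
    have hab2 : a.val + 2 ≤ b.val := by omega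
    refine ⟨fun p => match p with
      | Sum.inl i => if i.val = 0 then y else y'
      | Sum.inr (Sum.inl k) => v ⟨a.val - k.val, by omega⟩
      | Sum.inr (Sum.inr k) => v ⟨b.val + k.val, by have := k.isLt; have := b.isLt; omega⟩, ?_, ?_⟩
    case' _ =>
      intro p q h
      rcases p with i|k|k <;> rcases q with j|k'|k'
      all_goals try fin_cases i
      all_goals try fin_cases j
      all_goals simp only at h
      all_goals (try have hk := k.isLt); all_goals (try have hk' := k'.isLt)
      all_goals simp_all
      all_goals first
        | exact hwy _ h
        | exact hwy _ h.symm
        | exact hwy' _ h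
        | exact hwy' _ h.symm
        | exact hne h
        | exact hne h.symm
        | (have h2 := congrArg Fin.val (hinj h); simp at h2; omega)
        | (have h2 := congrArg Fin.val (hinj h); simp at h2; exact Fin.ext (by omega))

    intro p q
    rcases p with i|k|k <;> rcases q with j|k'|k'
    · fin_cases i <;> fin_cases j <;>
        simp [F3G, SimpleGraph.fromRel_adj, SimpleGraph.irrefl] <;>
        first | exact hnadj | exact fun h => hnadj h.symm
    · have hk' := k'.isLt
      fin_cases i <;> simp only [Fin.val_zero, Fin.val_one, Nat.one_ne_zero, if_true, if_false, ite_true, ite_false]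
      · rw [hYy (a.val - k'.val) (by omega) (by omega)]
        simp [F3G, SimpleGraph.fromRel_adj]
        all_goals omega
      · rw [hYy' (a.val - k'.val) (by omega) (by omega)]
        simp [F3G, SimpleGraph.fromRel_adj]
        all_goals omega
    · have hk' := k'.isLt
      fin_cases i <;> simp only [Fin.val_zero, Fin.val_one, Nat.one_ne_zero, if_true, if_false, ite_true, ite_false]
      · rw [hZy (b.val + k'.val) (by omega) (by omega)]
        simp [F3G, SimpleGraph.fromRel_adj]
        all_goals omega
      · rw [hZy' (b.val + k'.val) (by omega) (by omega)]
        simp [F3G, SimpleGraph.fromRel_adj]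
        all_goals omega
    · have hk := k.isLt
      rw [G.adj_comm]
      fin_cases j <;> simp only [Fin.val_zero, Fin.val_one, Nat.one_ne_zero, if_true, if_false, ite_true, ite_false]
      · rw [hYy (a.val - k.val) (by omega) (by omega)]
        simp [F3G, SimpleGraph.fromRel_adj]
        all_goals omega
      · rw [hYy' (a.val - k.val) (by omega) (by omega)]
        simp [F3G, SimpleGraph.fromRel_adj]
        all_goals omega
    · have hk := k.isLt; have hk' := k'.isLt
      simp only []
      rw [hvv]
      simp [F3G, SimpleGraph.fromRel_adj, Fin.ext_iff]
      all_goals omega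
    · have hk := k.isLt; have hk' := k'.isLt
      simp only []
      rw [hvv]
      simp [F3G, SimpleGraph.fromRel_adj, Fin.ext_iff]
      all_goals omega
    · have hk := k.isLt
      rw [G.adj_comm]
      fin_cases j <;> simp only [Fin.val_zero, Fin.val_one, Nat.one_ne_zero, if_true, if_false, ite_true, ite_false]
      · rw [hZy (b.val + k.val) (by omega) (by omega)]
        simp [F3G, SimpleGraph.fromRel_adj]
        all_goals omega
      · rw [hZy' (b.val + k.val) (by omega) (by omega)]
        simp [F3G, SimpleGraph.fromRel_adj]
        all_goals omega
    · have hk := k.isLt; have hk' := k'.isLt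
      simp only []
      rw [hvv]
      simp [F3G, SimpleGraph.fromRel_adj, Fin.ext_iff]
      all_goals omega
    · have hk := k.isLt; have hk' := k'.isLt
      simp only []
      rw [hvv]
      simp [F3G, SimpleGraph.fromRel_adj, Fin.ext_iff]
      all_goals omega

set_option maxHeartbeats 1600000 in
lemma caseBF1 {V : Type} {n l : ℕ} (hn : 3 ≤ n) (G : SimpleGraph V)
    (v : Fin l → V) (hinj : Function.Injective v)
    (hvv : ∀ i j : Fin l, G.Adj (v i) (v j) ↔ (i.val + 1 = j.val ∨ j.val + 1 = i.val))
    (w w' : V) (hne : w ≠ w') (hnadj : ¬ G.Adj w w')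
    (hww : ∀ i : Fin l, w ≠ v i) (hww' : ∀ i : Fin l, w' ≠ v i)
    (a b : Fin l) (hab : a.val + 2 ≤ b.val)
    (hwa : G.Adj w (v a)) (hw'a : G.Adj w' (v a)) (hwb : G.Adj w (v b))
    (hminw : ∀ i : Fin l, G.Adj w (v i) → a.val ≤ i.val)
    (hminw' : ∀ i : Fin l, G.Adj w' (v i) → a.val ≤ i.val)
    (hmaxw : ∀ i : Fin l, G.Adj w (v i) → i.val ≤ b.val)
    (hmaxw' : ∀ i : Fin l, G.Adj w' (v i) → i.val < b.val)
    (hlo : n ≤ a.val) (hhi : b.val + n ≤ l) :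
    HasInducedCopyG (F1G n) G := by
  have hal : a.val < l := a.isLt
  have hWlow : ∀ (m : ℕ) (hm : m < l), m < a.val → ¬ G.Adj w (v ⟨m, hm⟩) :=
    fun m hm hma h => by have := hminw _ h; simp at this; omega
  have hW'low : ∀ (m : ℕ) (hm : m < l), m < a.val → ¬ G.Adj w' (v ⟨m, hm⟩) :=
    fun m hm hma h => by have := hminw' _ h; simp at this; omega
  have hW'high : ∀ (m : ℕ) (hm : m < l), b.val ≤ m → ¬ G.Adj w' (v ⟨m, hm⟩) :=
    fun m hm hmb h => by have := hmaxw' _ h; simp at this; omega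
  have hWhigh : ∀ (m : ℕ) (hm : m < l), b.val ≤ m → (G.Adj w (v ⟨m, hm⟩) ↔ m = b.val) := by
    intro m hm hmb
    constructor
    · intro h; have := hmaxw _ h; simp at this; omega
    · intro h; have he : (⟨m, hm⟩ : Fin l) = b := Fin.ext h; rw [he]; exact hwb
  refine ⟨fun p => match p with
    | Sum.inl i => if i.val = 0 then v a else w'
    | Sum.inr (Sum.inl k) => v ⟨a.val - 1 - k.val, by omega⟩
    | Sum.inr (Sum.inr k) => if k.val = 0 then w
        else v ⟨b.val + k.val - 1, by have := k.isLt; have := b.isLt; omega⟩, ?_, ?_⟩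
  · intro p q h
    rcases p with i|k|k <;> rcases q with j|k'|k'
    all_goals try fin_cases i
    all_goals try fin_cases j
    all_goals simp only at h
    all_goals (try have hk := k.isLt); all_goals (try have hk' := k'.isLt)
    all_goals (try by_cases hk0 : k.val = 0) <;> (try by_cases hk0' : k'.val = 0)
    all_goals simp_all
    all_goals first
      | exact absurd h (hww _)
      | exact absurd h.symm (hww _)
      | exact absurd h (hww' _)
      | exact absurd h.symm (hww' _)
      | exact absurd h hne
      | exact absurd h.symm hne
      | exact Fin.ext (by omega)
      | (exfalso; have h2 := congrArg Fin.val (hinj h); simp at h2; omega)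
      | (have h2 := congrArg Fin.val (hinj h); simp at h2; omega)
      | (have h2 := congrArg Fin.val (hinj h); simp at h2; exact Fin.ext (by omega))
  · intro p q
    rcases p with i|k|k <;> rcases q with j|k'|k'
    · fin_cases i <;> fin_cases j <;>
        simp [F1G, SimpleGraph.fromRel_adj, SimpleGraph.irrefl] <;>
        first | exact hw'a.symm | exact hw'a
    · have hk' := k'.isLt
      fin_cases i <;> simp only [] <;>
        simp only [Fin.val_zero, Fin.val_one, Nat.one_ne_zero, if_true, if_false, ite_true,
          ite_false]
      · rw [hvv]
        simp [F1G, SimpleGraph.fromRel_adj]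
        all_goals omega
      · simp [F1G, SimpleGraph.fromRel_adj]
        exact hW'low _ _ (by omega)
    · have hk' := k'.isLt
      by_cases hk0' : k'.val = 0
      · fin_cases i <;> simp only [] <;> rw [if_pos hk0'] <;>
          simp only [Fin.val_zero, Fin.val_one, Nat.one_ne_zero, if_true, if_false, ite_true,
            ite_false] <;> simp [F1G, SimpleGraph.fromRel_adj, hk0']
        · exact hwa.symm
        · exact fun h => hnadj h.symm
      · fin_cases i <;> simp only [] <;> rw [if_neg hk0'] <;>
          simp only [Fin.val_zero, Fin.val_one, Nat.one_ne_zero, if_true, if_false, ite_true,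
            ite_false] <;> simp [F1G, SimpleGraph.fromRel_adj, hk0']
        · rw [hvv]; simp only [Fin.val_mk]; omega
        · exact hW'high _ _ (by omega)
    · have hk := k.isLt
      rw [G.adj_comm]
      fin_cases j <;> simp only [] <;>
        simp only [Fin.val_zero, Fin.val_one, Nat.one_ne_zero, if_true, if_false, ite_true,
          ite_false]
      · rw [hvv]
        simp [F1G, SimpleGraph.fromRel_adj]
        all_goals omega
      · simp [F1G, SimpleGraph.fromRel_adj]
        exact hW'low _ _ (by omega)
    · have hk := k.isLt; have hk' := k'.isLt
      simp only []
      rw [hvv]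
      simp [F1G, SimpleGraph.fromRel_adj, Fin.ext_iff, -Fin.val_eq_zero_iff]
      all_goals omega
    · have hk := k.isLt; have hk' := k'.isLt
      by_cases hk0' : k'.val = 0
      · simp only []; rw [if_pos hk0']
        simp [F1G, SimpleGraph.fromRel_adj, hk0']
        exact fun h => hWlow _ _ (by omega) h.symm
      · simp only []; rw [if_neg hk0']
        simp [F1G, SimpleGraph.fromRel_adj, hk0']
        rw [hvv]; simp only [Fin.val_mk]; omega
    · have hk := k.isLt
      by_cases hk0 : k.val = 0
      · rw [G.adj_comm]
        fin_cases j <;> simp only [] <;> rw [if_pos hk0] <;>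
          simp only [Fin.val_zero, Fin.val_one, Nat.one_ne_zero, if_true, if_false, ite_true,
            ite_false] <;> simp [F1G, SimpleGraph.fromRel_adj, hk0]
        · exact hwa.symm
        · exact fun h => hnadj h.symm
      · rw [G.adj_comm]
        fin_cases j <;> simp only [] <;> rw [if_neg hk0] <;>
          simp only [Fin.val_zero, Fin.val_one, Nat.one_ne_zero, if_true, if_false, ite_true,
            ite_false] <;> simp [F1G, SimpleGraph.fromRel_adj, hk0]
        · rw [hvv]; simp only [Fin.val_mk]; omega
        · exact hW'high _ _ (by omega)
    · have hk := k.isLt; have hk' := k'.isLt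
      by_cases hk0 : k.val = 0
      · rw [G.adj_comm]
        simp only []; rw [if_pos hk0]
        simp [F1G, SimpleGraph.fromRel_adj, hk0]
        exact fun h => hWlow _ _ (by omega) h.symm
      · rw [G.adj_comm]
        simp only []; rw [if_neg hk0]
        simp [F1G, SimpleGraph.fromRel_adj, hk0]
        rw [hvv]; simp only [Fin.val_mk]; omega
    · have hk := k.isLt; have hk' := k'.isLt
      by_cases hk0 : k.val = 0 <;> by_cases hk0' : k'.val = 0
      · simp only []; rw [if_pos hk0, if_pos hk0']
        simp [F1G, SimpleGraph.fromRel_adj, SimpleGraph.irrefl, hk0, hk0']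
      · simp only []; rw [if_pos hk0, if_neg hk0']
        simp only [F1G, SimpleGraph.fromRel_adj]
        rw [hWhigh (b.val + k'.val - 1) (by omega) (by omega)]
        simp [hk0]
        omega
      · simp only []; rw [if_neg hk0, if_pos hk0']
        rw [G.adj_comm]
        simp only [F1G, SimpleGraph.fromRel_adj]
        rw [hWhigh (b.val + k.val - 1) (by omega) (by omega)]
        simp [hk0']
        omega
      · simp only []; rw [if_neg hk0, if_neg hk0']
        rw [hvv]
        simp [F1G, SimpleGraph.fromRel_adj, Fin.ext_iff, -Fin.val_eq_zero_iff]
        all_goals omega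

set_option maxHeartbeats 1600000

/-- Let `n ≥ 3`, `G` be `{F^(1)_n, F^(2)_n, F^(3)_n, F^(4)_n}`-free,
`Q = v₁⋯v_l` an induced path, and `y ≠ y'` vertices off `Q`, each with a neighbor on
`Q`, all of whose neighbors on `Q` lie among `v_{n+1}, …, v_{l−n}`.  If `i_y = i_{y'}`
then `yy' ∈ E(G)`.  (Indices are shifted to be 0-based.) -/
theorem same_attachment_adjacent (n : ℕ) (hn : 3 ≤ n) (V : Type) (G : SimpleGraph V)
    (hF1 : ¬ HasInducedCopyG (F1G n) G) (hF2 : ¬ HasInducedCopyG (F2G n) G)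
    (hF3 : ¬ HasInducedCopyG (F3G n) G) (hF4 : ¬ HasInducedCopyG (F4G n) G)
    (l : ℕ) (v : Fin l → V) (hQ : IsInducedPathEmb G v)
    (y y' : V) (hne : y ≠ y') (hy : y ∉ Set.range v) (hy' : y' ∉ Set.range v)
    (hmid : ∀ i : Fin l, G.Adj y (v i) → n ≤ i.val ∧ i.val + n + 1 ≤ l)
    (hmid' : ∀ i : Fin l, G.Adj y' (v i) → n ≤ i.val ∧ i.val + n + 1 ≤ l)
    (iy : Fin l) (hiy : G.Adj y (v iy)) (hmin : ∀ i : Fin l, G.Adj y (v i) → iy ≤ i)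
    (iy' : Fin l) (hiy' : G.Adj y' (v iy'))
    (hmin' : ∀ i : Fin l, G.Adj y' (v i) → iy' ≤ i)
    (heq : iy = iy') :
    G.Adj y y' := by
  by_contra hnadj
  obtain ⟨hvinj, hvv⟩ := hQ
  have hiy2 : G.Adj y' (v iy) := by rw [heq]; exact hiy'
  have hmin2 : ∀ i : Fin l, G.Adj y' (v i) → iy ≤ i := by rw [heq]; exact hmin'
  have hwy : ∀ i : Fin l, y ≠ v i := fun i h => hy ⟨i, h.symm⟩
  have hwy' : ∀ i : Fin l, y' ≠ v i := fun i h => hy' ⟨i, h.symm⟩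
  obtain ⟨hn1, hn2⟩ := hmid iy hiy
  have step1 : ∀ z : V, (∀ i : Fin l, z ≠ v i) → G.Adj z (v iy) →
      (∀ i : Fin l, G.Adj z (v i) → iy ≤ i) → ∃ j : Fin l, G.Adj z (v j) ∧ iy < j := by
    intro z hz hza hzmin
    by_contra hno
    push_neg at hno
    refine hF1 (pendantF1 hn G v hvinj hvv z hz iy hza ?_ hn1 hn2)
    intro i hi
    exact le_antisymm (hno i hi) (hzmin i hi)
  obtain ⟨jy, hjy, hjylt⟩ := step1 y hwy hiy hmin
  obtain ⟨jy', hjy', hjy'lt⟩ := step1 y' hwy' hiy2 hmin2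
  obtain ⟨b, hbmem, hble⟩ : ∃ b : Fin l, (G.Adj y (v b) ∨ G.Adj y' (v b)) ∧
      ∀ i : Fin l, (G.Adj y (v i) ∨ G.Adj y' (v i)) → i ≤ b := by
    classical
    set S : Finset (Fin l) :=
      Finset.univ.filter (fun i => G.Adj y (v i) ∨ G.Adj y' (v i)) with hS
    have hSne : S.Nonempty := ⟨iy, Finset.mem_filter.mpr ⟨Finset.mem_univ _, Or.inl hiy⟩⟩
    refine ⟨S.max' hSne, (Finset.mem_filter.mp (S.max'_mem hSne)).2, ?_⟩
    intro i h
    exact S.le_max' i (Finset.mem_filter.mpr ⟨Finset.mem_univ _, h⟩)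
  have hmaxy : ∀ i : Fin l, G.Adj y (v i) → i.val ≤ b.val := fun i h => hble i (Or.inl h)
  have hmaxy' : ∀ i : Fin l, G.Adj y' (v i) → i.val ≤ b.val := fun i h => hble i (Or.inr h)
  have hminyv : ∀ i : Fin l, G.Adj y (v i) → iy.val ≤ i.val := fun i h => hmin i h
  have hminy'v : ∀ i : Fin l, G.Adj y' (v i) → iy.val ≤ i.val := fun i h => hmin2 i h
  have hab : iy.val < b.val := lt_of_lt_of_le hjylt (hble jy (Or.inl hjy))
  by_cases hyb : G.Adj y (v b) <;> by_cases hy'b : G.Adj y' (v b)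
  · have hhib : b.val + n ≤ l := by have := (hmid b hyb).2; omega
    rcases caseAF34 hn G v hvinj hvv y y' hne hnadj hwy hwy' iy b hab hiy hiy2 hyb hy'b
      hminyv hminy'v hmaxy hmaxy' hn1 hhib with h | h
    · exact hF3 h
    · exact hF4 h
  · have hhib : b.val + n ≤ l := by have := (hmid b hyb).2; omega
    have hmaxs : ∀ i : Fin l, G.Adj y' (v i) → i.val < b.val := by
      intro i h
      have h1 := hmaxy' i h
      rcases lt_or_eq_of_le h1 with h2 | h2
      · exact h2
      · exact absurd (Fin.ext h2 ▸ h) hy'b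
    have hab2 : iy.val + 2 ≤ b.val := by
      have h1 := hminy'v jy' hjy'
      have h2 := hmaxs jy' hjy'
      have h3 : iy.val < jy'.val := hjy'lt
      omega
    exact hF1 (caseBF1 hn G v hvinj hvv y y' hne hnadj hwy hwy' iy b hab2 hiy hiy2 hyb
      hminyv hminy'v hmaxy hmaxs hn1 hhib)
  · have hhib : b.val + n ≤ l := by have := (hmid' b hy'b).2; omega
    have hmaxs : ∀ i : Fin l, G.Adj y (v i) → i.val < b.val := by
      intro i h
      have h1 := hmaxy i h
      rcases lt_or_eq_of_le h1 with h2 | h2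
      · exact h2
      · exact absurd (Fin.ext h2 ▸ h) hyb
    have hab2 : iy.val + 2 ≤ b.val := by
      have h1 := hminyv jy hjy
      have h2 := hmaxs jy hjy
      have h3 : iy.val < jy.val := hjylt
      omega
    exact hF1 (caseBF1 hn G v hvinj hvv y' y (Ne.symm hne) (fun h => hnadj h.symm) hwy' hwy
      iy b hab2 hiy2 hiy hy'b hminy'v hminyv hmaxy' hmaxs hn1 hhib)
  · tauto
end

section
/- Let n ≥ 3, let G be a connected {K*_n, K_{1,n}, F^(1)_n, F^(2)_n}-free graph, let n₀ = max{⌈(n²−n−2)/2⌉, n}, let P = u_1 u_2 ⋯ u_m be a longest induced path of G, and define X₀ = {u_i : 1 ≤ i ≤ n₀ or m−n₀+1 ≤ i ≤ m}, Y = N_G(V(P) \ X₀) \ (X₀ ∪ N_G(X₀)), X₁ = N_G(X₀) \ V(P), and for i ≥ 2, X_i = N_G(X_{i−1}) \ (V(P) ∪ Y ∪ ⋃_{1 ≤ j ≤ i−2} X_j). Then V(G) is the disjoint union of V(P), Y, and X₁, …, X_{2n₀−1}; in particular X_i = ∅ for all i ≥ 2n₀. -/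
lemma noStar {V : Type} {G : SimpleGraph V} {n : ℕ} (hn : 0 < n)
    (hSt : ¬ HasInducedCopyG (StarG n) G) (p : V) (T : Finset V)
    (hcard : T.card = n) (hadj : ∀ v ∈ T, G.Adj p v)
    (hnadj : ∀ v ∈ T, ∀ w ∈ T, v ≠ w → ¬ G.Adj v w) : False := by
  apply hSt
  have e := T.equivFinOfCardEq hcard
  refine ⟨Sum.elim (fun _ => p) (fun i => (e.symm i : V)), ?_, ?_⟩
  · intro x y hxy
    have hpT : ∀ i : Fin n, p ≠ (e.symm i : V) := by
      intro i h
      exact G.irrefl (h ▸ hadj _ (e.symm i).2)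
    cases x with
    | inl x => cases y with
      | inl y => simp
      | inr y => exact absurd hxy (hpT y)
    | inr x => cases y with
      | inl y => exact absurd hxy.symm (hpT x)
      | inr y =>
          simp only [Sum.elim_inr] at hxy
          have : e.symm x = e.symm y := Subtype.ext hxy
          simpa using congrArg e this
  · intro a b
    have hpT : ∀ i : Fin n, p ≠ (e.symm i : V) := by
      intro i h; exact G.irrefl (h ▸ hadj _ (e.symm i).2)
    cases a with
    | inl a => cases b with
      | inl b =>
          simp [StarG, SimpleGraph.fromRel_adj]
      | inr b =>
          simp only [Sum.elim_inl, Sum.elim_inr, StarG, SimpleGraph.fromRel_adj]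
          constructor
          · intro _; exact ⟨by simp, Or.inl trivial⟩
          · intro _; exact hadj _ (e.symm b).2
    | inr a => cases b with
      | inl b =>
          simp only [Sum.elim_inl, Sum.elim_inr, StarG, SimpleGraph.fromRel_adj]
          constructor
          · intro h; exact ⟨by simp, Or.inr trivial⟩
          · intro _; exact (hadj _ (e.symm a).2).symm
      | inr b =>
          simp only [Sum.elim_inr, StarG, SimpleGraph.fromRel_adj]
          constructor
          · intro h
            by_cases hab : a = b
            · subst hab; exact absurd h (G.irrefl)
            · exact absurd h (hnadj _ (e.symm a).2 _ (e.symm b).2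
                (fun hh => hab (by simpa using congrArg e (Subtype.ext hh))))
          · rintro ⟨-, h | h⟩ <;> exact h.elim


section
variable {n : ℕ}

lemma F1a_ll (i j : Fin 2) : (F1G n).Adj (.inl i) (.inl j) ↔
    (i.val = 0 ∧ j.val = 1 ∨ j.val = 0 ∧ i.val = 1) := by
  simp only [F1G, SimpleGraph.fromRel_adj]
  constructor
  · rintro ⟨-, h⟩; exact h
  · intro h
    refine ⟨fun heq => ?_, h⟩
    rw [Sum.inl.injEq] at heq
    subst heq
    omega
lemma F1a_lrl (i : Fin 2) (j : Fin n) : (F1G n).Adj (.inl i) (.inr (.inl j)) ↔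
    (i.val = 0 ∧ j.val = 0) := by
  simp only [F1G, SimpleGraph.fromRel_adj]
  constructor
  · rintro ⟨-, h | h⟩; exact h; exact h.elim
  · intro h; exact ⟨by simp, Or.inl h⟩
lemma F1a_lrr (i : Fin 2) (j : Fin n) : (F1G n).Adj (.inl i) (.inr (.inr j)) ↔
    (i.val = 0 ∧ j.val = 0) := by
  simp only [F1G, SimpleGraph.fromRel_adj]
  constructor
  · rintro ⟨-, h | h⟩; exact h; exact h.elim
  · intro h; exact ⟨by simp, Or.inl h⟩
lemma F1a_rlrl (i j : Fin n) : (F1G n).Adj (.inr (.inl i)) (.inr (.inl j)) ↔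
    (i.val + 1 = j.val ∨ j.val + 1 = i.val) := by
  simp only [F1G, SimpleGraph.fromRel_adj]
  constructor
  · rintro ⟨-, h⟩; exact h
  · intro h
    refine ⟨fun heq => ?_, h⟩
    simp only [Sum.inr.injEq, Sum.inl.injEq] at heq
    subst heq
    omega
lemma F1a_rrrr (i j : Fin n) : (F1G n).Adj (.inr (.inr i)) (.inr (.inr j)) ↔
    (i.val + 1 = j.val ∨ j.val + 1 = i.val) := by
  simp only [F1G, SimpleGraph.fromRel_adj]
  constructor
  · rintro ⟨-, h⟩; exact h
  · intro h
    refine ⟨fun heq => ?_, h⟩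
    simp only [Sum.inr.injEq, Sum.inr.injEq] at heq
    subst heq
    omega
lemma F1a_rlrr (i j : Fin n) : (F1G n).Adj (.inr (.inl i)) (.inr (.inr j)) ↔ False := by
  simp only [F1G, SimpleGraph.fromRel_adj]
  constructor
  · rintro ⟨-, h | h⟩ <;> exact h
  · exact False.elim
lemma YZa_ll (i j : Fin 2) : (YZEdgeG n).Adj (.inl i) (.inl j) ↔ False := by
  simp only [YZEdgeG, SimpleGraph.fromRel_adj]
  constructor
  · rintro ⟨-, h | h⟩ <;> exact h
  · exact False.elim
lemma YZa_lrl (i : Fin 2) (j : Fin n) : (YZEdgeG n).Adj (.inl i) (.inr (.inl j)) ↔ False := by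
  simp only [YZEdgeG, SimpleGraph.fromRel_adj]
  constructor
  · rintro ⟨-, h | h⟩ <;> exact h
  · exact False.elim
lemma YZa_lrr (i : Fin 2) (j : Fin n) : (YZEdgeG n).Adj (.inl i) (.inr (.inr j)) ↔ False := by
  simp only [YZEdgeG, SimpleGraph.fromRel_adj]
  constructor
  · rintro ⟨-, h | h⟩ <;> exact h
  · exact False.elim
lemma YZa_rlrl (i j : Fin n) : (YZEdgeG n).Adj (.inr (.inl i)) (.inr (.inl j)) ↔ False := by
  simp only [YZEdgeG, SimpleGraph.fromRel_adj]
  constructor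
  · rintro ⟨-, h | h⟩ <;> exact h
  · exact False.elim
lemma YZa_rrrr (i j : Fin n) : (YZEdgeG n).Adj (.inr (.inr i)) (.inr (.inr j)) ↔ False := by
  simp only [YZEdgeG, SimpleGraph.fromRel_adj]
  constructor
  · rintro ⟨-, h | h⟩ <;> exact h
  · exact False.elim
lemma YZa_rlrr (i j : Fin n) : (YZEdgeG n).Adj (.inr (.inl i)) (.inr (.inr j)) ↔
    (i.val = 0 ∧ j.val = 0) := by
  simp only [YZEdgeG, SimpleGraph.fromRel_adj]
  constructor
  · rintro ⟨-, h | h⟩; exact h; exact h.elim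
  · intro h; exact ⟨by simp, Or.inl h⟩
end

section
variable {V : Type} {G : SimpleGraph V} {n : ℕ}

def F12map {V : Type} (p q : V) (Y Z : ℕ → V) {n : ℕ} : Fin 2 ⊕ Fin n ⊕ Fin n → V
  | Sum.inl i => if i.val = 0 then p else q
  | Sum.inr (Sum.inl i) => Y i.val
  | Sum.inr (Sum.inr i) => Z i.val

lemma noF12 (e : Bool)
    (hF : ¬ HasInducedCopyG (if e then F2G n else F1G n) G)
    (p q : V) (Y Z : ℕ → V)
    (hYinj : ∀ i < n, ∀ j < n, Y i = Y j → i = j)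
    (hZinj : ∀ i < n, ∀ j < n, Z i = Z j → i = j)
    (hYZne : ∀ i < n, ∀ j < n, Y i ≠ Z j)
    (hpY : ∀ i < n, p ≠ Y i) (hpZ : ∀ i < n, p ≠ Z i)
    (hqY : ∀ i < n, q ≠ Y i) (hqZ : ∀ i < n, q ≠ Z i)
    (hpq : p ≠ q)
    (hApq : G.Adj p q)
    (hApY : ∀ i < n, (G.Adj p (Y i) ↔ i = 0))
    (hApZ : ∀ i < n, (G.Adj p (Z i) ↔ i = 0))
    (hAqY : ∀ i < n, ¬ G.Adj q (Y i))
    (hAqZ : ∀ i < n, ¬ G.Adj q (Z i))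
    (hAYY : ∀ i < n, ∀ j < n, (G.Adj (Y i) (Y j) ↔ (i + 1 = j ∨ j + 1 = i)))
    (hAZZ : ∀ i < n, ∀ j < n, (G.Adj (Z i) (Z j) ↔ (i + 1 = j ∨ j + 1 = i)))
    (hAYZ : ∀ i < n, ∀ j < n, (G.Adj (Y i) (Z j) ↔ (e = true ∧ i = 0 ∧ j = 0))) :
    False := by
  apply hF
  refine ⟨F12map p q Y Z, ?_, ?_⟩
  · intro a b hab
    match a, b with
    | Sum.inl i, Sum.inl j =>
        simp only [F12map] at hab
        by_cases hi : i.val = 0 <;> by_cases hj : j.val = 0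
        · exact congrArg Sum.inl (Fin.ext (by omega))
        · rw [if_pos hi, if_neg hj] at hab; exact absurd hab hpq
        · rw [if_neg hi, if_pos hj] at hab; exact absurd hab.symm hpq
        · have h2 := i.isLt; have h3 := j.isLt
          exact congrArg Sum.inl (Fin.ext (by omega))
    | Sum.inl i, Sum.inr (Sum.inl j) =>
        simp only [F12map] at hab
        by_cases hi : i.val = 0
        all_goals first | (rw [if_pos hi] at hab) | (rw [if_neg hi] at hab)
        · exact absurd hab (hpY _ j.isLt)
        · exact absurd hab (hqY _ j.isLt)
    | Sum.inl i, Sum.inr (Sum.inr j) =>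
        simp only [F12map] at hab
        by_cases hi : i.val = 0
        all_goals first | (rw [if_pos hi] at hab) | (rw [if_neg hi] at hab)
        · exact absurd hab (hpZ _ j.isLt)
        · exact absurd hab (hqZ _ j.isLt)
    | Sum.inr (Sum.inl j), Sum.inl i =>
        simp only [F12map] at hab
        by_cases hi : i.val = 0
        all_goals first | (rw [if_pos hi] at hab) | (rw [if_neg hi] at hab)
        · exact absurd hab.symm (hpY _ j.isLt)
        · exact absurd hab.symm (hqY _ j.isLt)
    | Sum.inr (Sum.inr j), Sum.inl i =>
        simp only [F12map] at hab
        by_cases hi : i.val = 0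
        all_goals first | (rw [if_pos hi] at hab) | (rw [if_neg hi] at hab)
        · exact absurd hab.symm (hpZ _ j.isLt)
        · exact absurd hab.symm (hqZ _ j.isLt)
    | Sum.inr (Sum.inl i), Sum.inr (Sum.inl j) =>
        simp only [F12map] at hab
        exact congrArg (fun t => Sum.inr (Sum.inl t))
          (Fin.ext (hYinj _ i.isLt _ j.isLt hab))
    | Sum.inr (Sum.inr i), Sum.inr (Sum.inr j) =>
        simp only [F12map] at hab
        exact congrArg (fun t => Sum.inr (Sum.inr t))
          (Fin.ext (hZinj _ i.isLt _ j.isLt hab))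
    | Sum.inr (Sum.inl i), Sum.inr (Sum.inr j) =>
        simp only [F12map] at hab
        exact absurd hab (hYZne _ i.isLt _ j.isLt)
    | Sum.inr (Sum.inr i), Sum.inr (Sum.inl j) =>
        simp only [F12map] at hab
        exact absurd hab.symm (hYZne _ j.isLt _ i.isLt)
  · have hadj : ∀ a b, ((if e then F2G n else F1G n) : SimpleGraph _).Adj a b ↔
        ((F1G n).Adj a b ∨ (e = true ∧ (YZEdgeG n).Adj a b)) := by
      intro a b; cases e <;> simp [F2G, SimpleGraph.sup_adj]
    intro a b
    rw [hadj]
    match a, b with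
    | Sum.inl i, Sum.inl j =>
        simp only [F12map]
        rw [F1a_ll, YZa_ll]
        simp only [and_false, or_false]
        have h2 := i.isLt; have h3 := j.isLt
        by_cases hi : i.val = 0 <;> by_cases hj : j.val = 0
        · rw [if_pos hi, if_pos hj]
          exact iff_of_false G.irrefl (by omega)
        · rw [if_pos hi, if_neg hj]
          exact iff_of_true hApq (by omega)
        · rw [if_neg hi, if_pos hj]
          exact iff_of_true hApq.symm (by omega)
        · rw [if_neg hi, if_neg hj]
          exact iff_of_false G.irrefl (by omega)
    | Sum.inl i, Sum.inr (Sum.inl j) =>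
        simp only [F12map]
        rw [F1a_lrl, YZa_lrl]
        simp only [and_false, or_false]
        by_cases hi : i.val = 0
        · rw [if_pos hi, hApY _ j.isLt]; omega
        · rw [if_neg hi]
          exact iff_of_false (hAqY _ j.isLt) (by omega)
    | Sum.inl i, Sum.inr (Sum.inr j) =>
        simp only [F12map]
        rw [F1a_lrr, YZa_lrr]
        simp only [and_false, or_false]
        by_cases hi : i.val = 0
        · rw [if_pos hi, hApZ _ j.isLt]; omega
        · rw [if_neg hi]
          exact iff_of_false (hAqZ _ j.isLt) (by omega)
    | Sum.inr (Sum.inl j), Sum.inl i =>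
        simp only [F12map]
        rw [G.adj_comm, (F1G n).adj_comm, (YZEdgeG n).adj_comm, F1a_lrl, YZa_lrl]
        simp only [and_false, or_false]
        by_cases hi : i.val = 0
        · rw [if_pos hi, hApY _ j.isLt]; omega
        · rw [if_neg hi]
          exact iff_of_false (hAqY _ j.isLt) (by omega)
    | Sum.inr (Sum.inr j), Sum.inl i =>
        simp only [F12map]
        rw [G.adj_comm, (F1G n).adj_comm, (YZEdgeG n).adj_comm, F1a_lrr, YZa_lrr]
        simp only [and_false, or_false]
        by_cases hi : i.val = 0
        · rw [if_pos hi, hApZ _ j.isLt]; omega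
        · rw [if_neg hi]
          exact iff_of_false (hAqZ _ j.isLt) (by omega)
    | Sum.inr (Sum.inl i), Sum.inr (Sum.inl j) =>
        simp only [F12map]
        rw [F1a_rlrl, YZa_rlrl, hAYY _ i.isLt _ j.isLt]
        simp only [and_false, or_false]
    | Sum.inr (Sum.inr i), Sum.inr (Sum.inr j) =>
        simp only [F12map]
        rw [F1a_rrrr, YZa_rrrr, hAZZ _ i.isLt _ j.isLt]
        simp only [and_false, or_false]
    | Sum.inr (Sum.inl i), Sum.inr (Sum.inr j) =>
        simp only [F12map]
        rw [F1a_rlrr, YZa_rlrr, hAYZ _ i.isLt _ j.isLt]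
        constructor
        · rintro ⟨he, h1, h2⟩; exact Or.inr ⟨he, h1, h2⟩
        · rintro (h | ⟨he, h1, h2⟩); exact h.elim; exact ⟨he, h1, h2⟩
    | Sum.inr (Sum.inr i), Sum.inr (Sum.inl j) =>
        simp only [F12map]
        rw [G.adj_comm, (F1G n).adj_comm, (YZEdgeG n).adj_comm, F1a_rlrr, YZa_rlrr,
          hAYZ _ j.isLt _ i.isLt]
        constructor
        · rintro ⟨he, h1, h2⟩; exact Or.inr ⟨he, h1, h2⟩
        · rintro (h | ⟨he, h1, h2⟩); exact h.elim; exact ⟨he, h1, h2⟩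
end

lemma glue_path {V : Type} {G : SimpleGraph V} (N k : ℕ) (c d : ℕ → V)
    (hc : ∀ i < N, ∀ j < N, (G.Adj (c i) (c j) ↔ (i + 1 = j ∨ j + 1 = i)))
    (hd : ∀ i < k, ∀ j < k, (G.Adj (d i) (d j) ↔ (i + 1 = j ∨ j + 1 = i)))
    (hcinj : ∀ i < N, ∀ j < N, c i = c j → i = j)
    (hdinj : ∀ i < k, ∀ j < k, d i = d j → i = j)
    (hcd : ∀ i < N, ∀ j < k, c i ≠ d j)
    (hadj : ∀ i < N, ∀ j < k, (G.Adj (c i) (d j) ↔ (i = N - 1 ∧ j = 0)))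
    (hN : 0 < N) :
    IsInducedPathEmb G
      (fun t : Fin (N + k) => if t.val < N then c t.val else d (t.val - N)) := by
  constructor
  · intro s t h
    dsimp only at h
    by_cases h1 : s.val < N <;> by_cases h2 : t.val < N
    · rw [if_pos h1, if_pos h2] at h
      exact Fin.ext (hcinj _ h1 _ h2 h)
    · rw [if_pos h1, if_neg h2] at h
      exact absurd h (hcd _ h1 _ (by omega))
    · rw [if_neg h1, if_pos h2] at h
      exact absurd h.symm (hcd _ h2 _ (by omega))
    · rw [if_neg h1, if_neg h2] at h
      have := hdinj _ (by omega : s.val - N < k) _ (by omega : t.val - N < k) h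
      exact Fin.ext (by omega)
  · intro s t
    dsimp only
    have hs := s.isLt; have ht := t.isLt
    by_cases h1 : s.val < N <;> by_cases h2 : t.val < N
    · rw [if_pos h1, if_pos h2, hc _ h1 _ h2]
    · rw [if_pos h1, if_neg h2, hadj _ h1 _ (by omega : t.val - N < k)]
      omega
    · rw [if_neg h1, if_pos h2, G.adj_comm, hadj _ h2 _ (by omega : s.val - N < k)]
      omega
    · rw [if_neg h1, if_neg h2,
        hd _ (by omega : s.val - N < k) _ (by omega : t.val - N < k)]
      omega


/-- Chiba–Furuya, Lemma 2.6. With `P = u₁⋯u_m` a longest induced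
path of a connected `{K*_n, K_{1,n}, F^(1)_n, F^(2)_n}`-free graph `G` (`n ≥ 3`),
`n₀ = max{⌈(n²−n−2)/2⌉, n}` and the sets `X₀, Y, X₁, X₂, …` defined as in the paper,
`V(G)` is the disjoint union of `V(P)`, `Y`, and `X₁, …, X_{2n₀−1}`; in particular
`X_i = ∅` for `i ≥ 2n₀`.  (Indices of `P` are 0-based.) -/
theorem partition_around_longest_induced_path (n : ℕ) (hn : 3 ≤ n)
    (V : Type) [Fintype V] (G : SimpleGraph V) (hconn : G.Connected)
    (hKs : ¬ HasInducedCopyG (KStarG n) G)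
    (hSt : ¬ HasInducedCopyG (StarG n) G)
    (hF1 : ¬ HasInducedCopyG (F1G n) G)
    (hF2 : ¬ HasInducedCopyG (F2G n) G)
    (n₀ : ℕ) (hn₀ : n₀ = max ((n ^ 2 - n - 1) / 2) n)
    (m : ℕ) (u : Fin m → V) (hu : IsInducedPathEmb G u)
    (hlong : ∀ (m' : ℕ) (u' : Fin m' → V), IsInducedPathEmb G u' → m' ≤ m)
    (X : ℕ → Set V) (Y : Set V)
    (hX0 : X 0 = {x | ∃ i : Fin m, x = u i ∧ (i.val < n₀ ∨ m ≤ i.val + n₀)})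
    (hY : Y = nbhd G (Set.range u \ X 0) \ (X 0 ∪ nbhd G (X 0)))
    (hX1 : X 1 = nbhd G (X 0) \ Set.range u)
    (hXs : ∀ i : ℕ, X (i + 2) =
      nbhd G (X (i + 1)) \ (Set.range u ∪ Y ∪ ⋃ j ∈ Finset.Icc 1 i, X j)) :
    (Set.range u ∪ Y ∪ ⋃ i ∈ Finset.Icc 1 (2 * n₀ - 1), X i) = Set.univ ∧
    Disjoint (Set.range u) Y ∧
    (∀ i ∈ Finset.Icc 1 (2 * n₀ - 1), Disjoint (Set.range u) (X i)) ∧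
    (∀ i ∈ Finset.Icc 1 (2 * n₀ - 1), Disjoint Y (X i)) ∧
    (∀ i ∈ Finset.Icc 1 (2 * n₀ - 1), ∀ j ∈ Finset.Icc 1 (2 * n₀ - 1), i ≠ j →
      Disjoint (X i) (X j)) ∧
    (∀ i : ℕ, 2 * n₀ ≤ i → X i = ∅) := by
  classical
  -- arithmetic facts
  have hsq : n ^ 2 = n * n := by ring
  have hev : ∃ t, (n - 1) * n = 2 * t := by
    obtain ⟨t, ht⟩ := Nat.even_mul_succ_self (n - 1)
    have hn1 : n - 1 + 1 = n := by omega
    rw [hn1] at ht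
    exact ⟨t, by omega⟩
  have hmul : (n - 1) * n = n * n - n := by
    rw [Nat.sub_mul, one_mul]
  have hn₀n : n ≤ n₀ := by omega
  have hNn2 : n ^ 2 - n - 2 ≤ 2 * n₀ := by
    obtain ⟨t, ht⟩ := hev
    have h1 : (n ^ 2 - n - 1) / 2 ≤ n₀ := by omega
    have h2 : n * n - n = 2 * t := by omega
    have h3 : n ^ 2 - n = 2 * t := by omega
    omega
  have hnsq : 3 * n ≤ n * n := Nat.mul_le_mul_right n hn
  -- m ≥ 1
  have hm : 0 < m := by
    have h1 : IsInducedPathEmb G (fun _ : Fin 1 => Classical.choice hconn.nonempty) := by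
      constructor
      · intro s t _; exact Subsingleton.elim s t
      · intro i j
        exact iff_of_false (G.irrefl) (by omega)
    have := hlong 1 _ h1
    omega
  -- the ℕ-indexed path function
  set U : ℕ → V := fun i => u ⟨i % m, Nat.mod_lt _ hm⟩ with hUdef
  have hUeq : ∀ i, ∀ hi : i < m, U i = u ⟨i, hi⟩ := by
    intro i hi
    simp only [hUdef]
    congr 1
    exact Fin.ext (Nat.mod_eq_of_lt hi)
  have hUadj : ∀ i, i < m → ∀ j, j < m → (G.Adj (U i) (U j) ↔ (i + 1 = j ∨ j + 1 = i)) := by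
    intro i hi j hj
    rw [hUeq i hi, hUeq j hj]
    exact hu.2 ⟨i, by omega⟩ ⟨j, by omega⟩
  have hUinj : ∀ i, i < m → ∀ j, j < m → U i = U j → i = j := by
    intro i hi j hj h
    rw [hUeq i hi, hUeq j hj] at h
    have := hu.1 h
    exact congrArg Fin.val this
  have hUmem : ∀ i, U i ∈ Set.range u := fun i => ⟨_, rfl⟩
  have hranU : ∀ v, v ∈ Set.range u → ∃ i, i < m ∧ v = U i := by
    rintro v ⟨i, rfl⟩
    exact ⟨i.val, i.isLt, by rw [hUeq i.val i.isLt]⟩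
  -- basic membership facts
  have hX0sub : X 0 ⊆ Set.range u := by
    rw [hX0]; rintro x ⟨i, rfl, -⟩; exact ⟨i, rfl⟩
  have hX0memU : ∀ i, i < m → (U i ∈ X 0 ↔ (i < n₀ ∨ m ≤ i + n₀)) := by
    intro i hi
    rw [hX0, hUeq i hi]
    constructor
    · rintro ⟨j, hj, hcond⟩
      have : (⟨i, by omega⟩ : Fin m) = j := hu.1 hj
      subst this
      exact hcond
    · intro h; exact ⟨⟨i, by omega⟩, rfl, h⟩
  have hYnotP : ∀ y ∈ Y, y ∉ Set.range u := by
    intro y hy hyP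
    rw [hY] at hy
    obtain ⟨⟨hy1, -⟩, hy2⟩ := hy
    by_cases h0 : y ∈ X 0
    · exact hy2 (Or.inl h0)
    · exact hy1 ⟨hyP, h0⟩
  have hYnotN0 : ∀ y ∈ Y, y ∉ nbhd G (X 0) := by
    intro y hy
    rw [hY] at hy
    exact fun hc => hy.2 (Or.inr hc)
  have hX1nbhd : ∀ v ∈ X 1, v ∈ nbhd G (X 0) ∧ v ∉ Set.range u := by
    intro v hv; rw [hX1] at hv; exact ⟨hv.1, hv.2⟩
  have hXdef : ∀ i, 2 ≤ i → X i =
      nbhd G (X (i - 1)) \ (Set.range u ∪ Y ∪ ⋃ j ∈ Finset.Icc 1 (i - 2), X j) := by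
    intro i hi
    have h := hXs (i - 2)
    have h2 : i - 2 + 2 = i := by omega
    have h3 : i - 2 + 1 = i - 1 := by omega
    rw [h2, h3] at h
    exact h
  have hXnotP : ∀ i, 1 ≤ i → ∀ v ∈ X i, v ∉ Set.range u := by
    intro i hi v hv
    rcases Nat.lt_or_ge i 2 with h | h
    · have h1 : i = 1 := by omega
      rw [h1] at hv
      exact (hX1nbhd v hv).2
    · rw [hXdef i h] at hv
      exact fun hc => hv.2 (Or.inl (Or.inl hc))
  have hXnotY : ∀ i, 1 ≤ i → ∀ v ∈ X i, v ∉ Y := by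
    intro i hi v hv hvY
    rcases Nat.lt_or_ge i 2 with h | h
    · have h1 : i = 1 := by omega
      rw [h1] at hv
      exact hYnotN0 v hvY (hX1nbhd v hv).1
    · rw [hXdef i h] at hv
      exact hv.2 (Or.inl (Or.inr hvY))
  have hXdisj : ∀ i, 1 ≤ i → ∀ j, i < j → ∀ v, v ∈ X i → v ∈ X j → False := by
    intro i hi j hij v hvi hvj
    rcases Nat.lt_or_ge j (i + 2) with h | h
    · have h1 : j = i + 1 := by omega
      subst h1
      rw [hXdef (i+1) (by omega)] at hvj
      have : v ∈ nbhd G (X i) := by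
        have h2 : i + 1 - 1 = i := by omega
        rw [h2] at hvj
        exact hvj.1
      exact this.1 hvi
    · rw [hXdef j (by omega)] at hvj
      apply hvj.2
      apply Set.mem_union_right
      simp only [Set.mem_iUnion]
      exact ⟨i, by simp only [Finset.mem_Icc]; omega, hvi⟩
  -- key: a vertex outside range u ∪ X 1 ∪ Y has no neighbor on P
  have hPadj : ∀ v, v ∉ Set.range u → v ∉ X 1 → v ∉ Y → ∀ i, i < m → ¬ G.Adj v (U i) := by
    intro v hvP hv1 hvY i hi hadj
    have hvX0 : v ∉ X 0 := fun hc => hvP (hX0sub hc)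
    by_cases hc : i < n₀ ∨ m ≤ i + n₀
    · apply hv1
      rw [hX1]
      exact ⟨⟨hvX0, U i, (hX0memU i hi).2 hc, hadj⟩, hvP⟩
    · have hUi : U i ∈ Set.range u \ X 0 := by
        refine ⟨hUmem i, ?_⟩
        rw [hX0memU i hi]
        exact hc
      by_cases hn0 : v ∈ nbhd G (X 0)
      · apply hv1; rw [hX1]; exact ⟨hn0, hvP⟩
      · apply hvY
        rw [hY]
        refine ⟨⟨?_, U i, hUi, hadj⟩, ?_⟩
        · exact fun hcc => hvP hcc.1
        · rintro (h | h)
          · exact hvX0 h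
          · exact hn0 h
  have hXnoP : ∀ i, 2 ≤ i → ∀ v ∈ X i, ∀ t, t < m → ¬ G.Adj v (U t) := by
    intro i hi v hv t ht
    refine hPadj v (hXnotP i (by omega) v hv) ?_ (hXnotY i (by omega) v hv) t ht
    intro hc
    exact hXdisj 1 le_rfl i (by omega) v hc hv
  have hXnc : ∀ i, 1 ≤ i → ∀ j, i + 2 ≤ j → ∀ v ∈ X i, ∀ w ∈ X j, ¬ G.Adj v w := by
    intro i hi j hij v hv w hw hadj
    have hwXi1 : w ∈ X (i + 1) := by
      rw [hXdef (i+1) (by omega)]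
      have h2 : i + 1 - 1 = i := by omega
      have h3 : i + 1 - 2 = i - 1 := by omega
      rw [h2, h3]
      refine ⟨⟨?_, v, hv, hadj.symm⟩, ?_⟩
      · intro hc; exact hXdisj i hi j (by omega) w hc hw
      · rintro ((h | h) | h)
        · exact hXnotP j (by omega) w hw h
        · exact hXnotY j (by omega) w hw h
        · simp only [Set.mem_iUnion] at h
          obtain ⟨l, hl, hwl⟩ := h
          simp only [Finset.mem_Icc] at hl
          exact hXdisj l hl.1 j (by omega) w hwl hw
    exact hXdisj (i+1) (by omega) j (by omega) w hwXi1 hw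
  -- the attach lemma
  have hattach : ∀ v₀ q : V, v₀ ∉ Set.range u → q ∉ Set.range u → G.Adj v₀ q →
      (∀ i, i < m → ¬ G.Adj q (U i)) → ∀ a b : ℕ,
      a < m → b < m → G.Adj v₀ (U a) → G.Adj v₀ (U b) →
      (∀ t, t < m → G.Adj v₀ (U t) → a ≤ t ∧ t ≤ b) →
      n ≤ a → b + n < m → False := by
    intro v₀ q hv₀P hqP hadj0 hqnoP a b ham hbm hadja hadjb hbnd hna hbnm
    have hab : a ≤ b := (hbnd a ham hadja).2
    have hApZgen : ∀ i < n, (G.Adj v₀ (U (b + i)) ↔ i = 0) := by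
      intro i hi
      constructor
      · intro h
        have := hbnd (b + i) (by omega) h
        omega
      · rintro rfl
        simpa using hadjb
    have hApYgen : ∀ i < n, (G.Adj v₀ (U (a - i)) ↔ i = 0) := by
      intro i hi
      constructor
      · intro h
        have := hbnd (a - i) (by omega) h
        omega
      · rintro rfl
        simpa using hadja
    rcases Nat.lt_or_ge (a + 1) b with hb2 | hb1
    · -- b ≥ a + 2 : F1 with both-sided paths
      apply noF12 (G := G) (n := n) false (by simpa using hF1) v₀ q
        (fun i => U (a - i)) (fun i => U (b + i))
      · intro i hi j hj h
        have := hUinj _ (by omega) _ (by omega) h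
        omega
      · intro i hi j hj h
        have := hUinj _ (by omega) _ (by omega) h
        omega
      · intro i hi j hj h
        have := hUinj _ (by omega) _ (by omega) h
        omega
      · intro i hi h
        exact hv₀P (h ▸ hUmem _)
      · intro i hi h
        exact hv₀P (h ▸ hUmem _)
      · intro i hi h
        exact hqP (h ▸ hUmem _)
      · intro i hi h
        exact hqP (h ▸ hUmem _)
      · exact hadj0.ne
      · exact hadj0
      · exact hApYgen
      · exact hApZgen
      · intro i hi
        exact hqnoP _ (by omega)
      · intro i hi
        exact hqnoP _ (by omega)
      · intro i hi j hj
        rw [hUadj _ (by omega) _ (by omega)]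
        omega
      · intro i hi j hj
        rw [hUadj _ (by omega) _ (by omega)]
        omega
      · intro i hi j hj
        refine iff_of_false (fun h => ?_) (by simp)
        rw [hUadj _ (by omega) _ (by omega)] at h
        omega
    · rcases Nat.lt_or_ge a b with hb3 | hb4
      · -- b = a + 1 : F2
        have hba : b = a + 1 := by omega
        apply noF12 (G := G) (n := n) true (by simpa using hF2) v₀ q
          (fun i => U (a - i)) (fun i => U (b + i))
        · intro i hi j hj h
          have := hUinj _ (by omega) _ (by omega) h
          omega
        · intro i hi j hj h
          have := hUinj _ (by omega) _ (by omega) h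
          omega
        · intro i hi j hj h
          have := hUinj _ (by omega) _ (by omega) h
          omega
        · intro i hi h
          exact hv₀P (h ▸ hUmem _)
        · intro i hi h
          exact hv₀P (h ▸ hUmem _)
        · intro i hi h
          exact hqP (h ▸ hUmem _)
        · intro i hi h
          exact hqP (h ▸ hUmem _)
        · exact hadj0.ne
        · exact hadj0
        · exact hApYgen
        · exact hApZgen
        · intro i hi
          exact hqnoP _ (by omega)
        · intro i hi
          exact hqnoP _ (by omega)
        · intro i hi j hj
          rw [hUadj _ (by omega) _ (by omega)]
          omega
        · intro i hi j hj
          rw [hUadj _ (by omega) _ (by omega)]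
          omega
        · intro i hi j hj
          rw [hUadj _ (by omega) _ (by omega)]
          constructor
          · intro h
            exact ⟨rfl, by omega, by omega⟩
          · rintro ⟨-, rfl, rfl⟩
            omega
      · -- b = a : F1 centered at U a with pendant v₀
        have hba : b = a := by omega
        apply noF12 (G := G) (n := n) false (by simpa using hF1) (U a) v₀
          (fun i => U (a + 1 + i)) (fun i => U (a - 1 - i))
        · intro i hi j hj h
          have := hUinj _ (by omega) _ (by omega) h
          omega
        · intro i hi j hj h
          have := hUinj _ (by omega) _ (by omega) h
          omega
        · intro i hi j hj h
          have := hUinj _ (by omega) _ (by omega) h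
          omega
        · intro i hi h
          have := hUinj _ (by omega) _ (by omega) h
          omega
        · intro i hi h
          have := hUinj _ (by omega) _ (by omega) h
          omega
        · intro i hi h
          exact hv₀P (h ▸ hUmem _)
        · intro i hi h
          exact hv₀P (h ▸ hUmem _)
        · intro h
          exact hv₀P (h ▸ hUmem _)
        · exact hadja.symm
        · intro i hi
          rw [hUadj _ (by omega) _ (by omega)]
          omega
        · intro i hi
          rw [hUadj _ (by omega) _ (by omega)]
          omega
        · intro i hi h
          have := hbnd (a + 1 + i) (by omega) h
          omega
        · intro i hi h
          have := hbnd (a - 1 - i) (by omega) h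
          omega
        · intro i hi j hj
          rw [hUadj _ (by omega) _ (by omega)]
          omega
        · intro i hi j hj
          rw [hUadj _ (by omega) _ (by omega)]
          omega
        · intro i hi j hj
          refine iff_of_false (fun h => ?_) (by simp)
          rw [hUadj _ (by omega) _ (by omega)] at h
          omega
  -- X i is empty for i ≥ 2n₀
  have hempty : ∀ i, 2 * n₀ ≤ i → X i = ∅ := by
    have hN2n : 2 * n ≤ 2 * n₀ := by omega
    have hemptyN : X (2 * n₀) = ∅ := by
      by_contra hneX
      obtain ⟨x, hx⟩ := Set.nonempty_iff_ne_empty.2 hneX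
      -- chain construction
      have hchain : ∀ k, ∀ v ∈ X (k + 1), ∃ c : ℕ → V,
          c (k + 1) = v ∧ (∀ i, 1 ≤ i → i ≤ k + 1 → c i ∈ X i) ∧
          (∀ i, 1 ≤ i → i + 1 ≤ k + 1 → G.Adj (c i) (c (i + 1))) := by
        intro k
        induction k with
        | zero =>
            intro v hv
            refine ⟨fun _ => v, rfl, ?_, ?_⟩
            · intro i h1 h2
              have : i = 1 := by omega
              rw [this]
              exact hv
            · intro i h1 h2
              omega
        | succ k ih =>
            intro v hv
            have hv' := hv
            rw [hXs k] at hv'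
            obtain ⟨⟨hvn, x', hx', hadjx⟩, -⟩ := hv'
            obtain ⟨c', hc0, hc1, hc2⟩ := ih x' hx'
            refine ⟨fun i => if i = k + 2 then v else c' i, by simp, ?_, ?_⟩
            · intro i h1 h2
              dsimp only
              by_cases hik : i = k + 2
              · rw [if_pos hik, hik]
                exact hv
              · rw [if_neg hik]
                exact hc1 i h1 (by omega)
            · intro i h1 h2
              dsimp only
              by_cases hik : i + 1 = k + 2
              · have hi : i = k + 1 := by omega
                rw [if_neg (by omega), if_pos hik, hi, hc0]
                exact hadjx.symm
              · rw [if_neg (by omega), if_neg hik]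
                exact hc2 i h1 (by omega)
      obtain ⟨c, hcN, hcX0, hcadj0⟩ := hchain (2 * n₀ - 1) x
        (by
          have e : 2 * n₀ - 1 + 1 = 2 * n₀ := by omega
          rw [e]
          exact hx)
      have hcX : ∀ i, 1 ≤ i → i ≤ 2 * n₀ → c i ∈ X i := by
        intro i h1 h2
        exact hcX0 i h1 (by omega)
      have hcadj : ∀ i, 1 ≤ i → i + 1 ≤ 2 * n₀ → G.Adj (c i) (c (i + 1)) := by
        intro i h1 h2
        exact hcadj0 i h1 (by omega)
      have hcne : ∀ i, 1 ≤ i → i ≤ 2 * n₀ → ∀ j, 1 ≤ j → j ≤ 2 * n₀ →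
          c i = c j → i = j := by
        intro i hi1 hi2 j hj1 hj2 h
        by_contra hne
        rcases Nat.lt_or_ge i j with hlt | hge
        · exact hXdisj i hi1 j hlt (c i) (hcX i hi1 hi2) (h ▸ hcX j hj1 hj2)
        · exact hXdisj j hj1 i (by omega) (c j) (hcX j hj1 hj2) (h ▸ hcX i hi1 hi2)
      have hcnotP : ∀ i, 1 ≤ i → i ≤ 2 * n₀ → c i ∉ Set.range u := by
        intro i h1 h2
        exact hXnotP i h1 (c i) (hcX i h1 h2)
      have hcnoP : ∀ i, 2 ≤ i → i ≤ 2 * n₀ → ∀ t, t < m → ¬ G.Adj (c i) (U t) := by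
        intro i h1 h2 t ht
        exact hXnoP i h1 (c i) (hcX i (by omega) h2) t ht
      have hciff : ∀ i, 1 ≤ i → i ≤ 2 * n₀ → ∀ j, 1 ≤ j → j ≤ 2 * n₀ →
          (G.Adj (c i) (c j) ↔ (i + 1 = j ∨ j + 1 = i)) := by
        intro i hi1 hi2 j hj1 hj2
        constructor
        · intro h
          by_contra hc
          push_neg at hc
          rcases lt_trichotomy i j with hlt | heq | hgt
          · exact hXnc i hi1 j (by omega) (c i) (hcX i hi1 hi2) (c j) (hcX j hj1 hj2) h
          · exact G.irrefl (heq ▸ h)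
          · exact hXnc j hj1 i (by omega) (c j) (hcX j hj1 hj2) (c i) (hcX i hi1 hi2) h.symm
        · rintro (h | h)
          · rw [← h]
            exact hcadj i hi1 (by omega)
          · rw [← h]
            exact (hcadj j hj1 (by omega)).symm
      -- the neighborhood of c 1 on the path
      set A := (Finset.range m).filter (fun t => G.Adj (c 1) (U t)) with hAdef
      have hAmem : ∀ t, t ∈ A ↔ (t < m ∧ G.Adj (c 1) (U t)) := by
        intro t
        simp [hAdef, Finset.mem_filter, Finset.mem_range]
      have hAne : A.Nonempty := by
        have h1 : c 1 ∈ X 1 := hcX 1 le_rfl (by omega)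
        rw [hX1] at h1
        obtain ⟨⟨-, x', hx', hadjx⟩, -⟩ := h1
        obtain ⟨t, ht, hteq⟩ := hranU x' (hX0sub hx')
        exact ⟨t, (hAmem t).2 ⟨ht, hteq ▸ hadjx⟩⟩
      set a := A.min' hAne with hadef
      set b := A.max' hAne with hbdef
      have haA := (hAmem a).1 (A.min'_mem hAne)
      have hbA := (hAmem b).1 (A.max'_mem hAne)
      have ham : a < m := haA.1
      have hbm : b < m := hbA.1
      have hadja : G.Adj (c 1) (U a) := haA.2
      have hadjb : G.Adj (c 1) (U b) := hbA.2
      have habnd : ∀ t, t < m → G.Adj (c 1) (U t) → a ≤ t ∧ t ≤ b := by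
        intro t ht h
        have htA : t ∈ A := (hAmem t).2 ⟨ht, h⟩
        exact ⟨A.min'_le t htA, A.le_max' t htA⟩
      -- glue along the top end: b ≥ 2n₀
      have hbN : 2 * n₀ ≤ b := by
        have hglue := glue_path (G := G) (2 * n₀) (m - b)
          (fun i => c (2 * n₀ - i)) (fun j => U (b + j))
          (by
            intro i hi j hj
            rw [hciff (2 * n₀ - i) (by omega) (by omega) (2 * n₀ - j) (by omega) (by omega)]
            omega)
          (by
            intro i hi j hj
            rw [hUadj _ (by omega) _ (by omega)]
            omega)
          (by
            intro i hi j hj h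
            have := hcne _ (by omega) (by omega) _ (by omega) (by omega) h
            omega)
          (by
            intro i hi j hj h
            have := hUinj _ (by omega) _ (by omega) h
            omega)
          (by
            intro i hi j hj h
            exact hcnotP _ (by omega) (by omega) (h ▸ hUmem _))
          (by
            intro i hi j hj
            by_cases hi1 : i = 2 * n₀ - 1
            · have e : 2 * n₀ - i = 1 := by omega
              rw [e]
              constructor
              · intro h
                have := habnd (b + j) (by omega) h
                exact ⟨hi1, by omega⟩
              · rintro ⟨-, rfl⟩
                simpa using hadjb
            · refine iff_of_false (fun h => ?_) (fun h => hi1 h.1)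
              exact hcnoP (2 * n₀ - i) (by omega) (by omega) (b + j) (by omega) h)
          (by omega)
        have := hlong (2 * n₀ + (m - b)) _ hglue
        omega
      -- glue along the bottom end: a + 1 + 2n₀ ≤ m
      have haN : 2 * n₀ + (a + 1) ≤ m := by
        have hglue := glue_path (G := G) (2 * n₀) (a + 1)
          (fun i => c (2 * n₀ - i)) (fun j => U (a - j))
          (by
            intro i hi j hj
            rw [hciff (2 * n₀ - i) (by omega) (by omega) (2 * n₀ - j) (by omega) (by omega)]
            omega)
          (by
            intro i hi j hj
            rw [hUadj _ (by omega) _ (by omega)]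
            omega)
          (by
            intro i hi j hj h
            have := hcne _ (by omega) (by omega) _ (by omega) (by omega) h
            omega)
          (by
            intro i hi j hj h
            have := hUinj _ (by omega) _ (by omega) h
            omega)
          (by
            intro i hi j hj h
            exact hcnotP _ (by omega) (by omega) (h ▸ hUmem _))
          (by
            intro i hi j hj
            by_cases hi1 : i = 2 * n₀ - 1
            · have e : 2 * n₀ - i = 1 := by omega
              rw [e]
              constructor
              · intro h
                have := habnd (a - j) (by omega) h
                exact ⟨hi1, by omega⟩
              · rintro ⟨-, rfl⟩
                simpa using hadja
            · refine iff_of_false (fun h => ?_) (fun h => hi1 h.1)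
              exact hcnoP (2 * n₀ - i) (by omega) (by omega) (a - j) (by omega) h)
          (by omega)
        have := hlong (2 * n₀ + (a + 1)) _ hglue
        omega
      -- main case split
      rcases Nat.lt_or_ge (a + 1) b with hb2 | hb1
      · -- b ≥ a + 2
        -- Step 1: a is small
        have haS : a + 2 ≤ n := by
          by_contra hcon
          push_neg at hcon
          apply noF12 (G := G) (n := n) false (by simpa using hF1) (c 1) (U (b))
            (fun i => c (2 + i)) (fun i => U (a - i))
          · intro i hi j hj h
            have := hcne _ (by omega) (by omega) _ (by omega) (by omega) h
            omega
          · intro i hi j hj h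
            have := hUinj _ (by omega) _ (by omega) h
            omega
          · intro i hi j hj h
            exact hcnotP _ (by omega) (by omega) (h ▸ hUmem _)
          · intro i hi h
            have := hcne _ (by omega) (by omega) _ (by omega) (by omega) h
            omega
          · intro i hi h
            exact hcnotP 1 (by omega) (by omega) (h ▸ hUmem _)
          · intro i hi h
            exact hcnotP _ (by omega) (by omega) (h ▸ hUmem _)
          · intro i hi h
            have := hUinj _ (by omega) _ (by omega) h
            omega
          · intro h
            exact hcnotP 1 (by omega) (by omega) (h ▸ hUmem _)
          · exact hadjb
          · intro i hi
            rw [hciff 1 (by omega) (by omega) (2 + i) (by omega) (by omega)]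
            omega
          · intro i hi
            constructor
            · intro h
              have := habnd (a - i) (by omega) h
              omega
            · rintro rfl
              simpa using hadja
          · intro i hi h
            exact hcnoP (2 + i) (by omega) (by omega) (b) (by omega) h.symm
          · intro i hi
            rw [hUadj _ (by omega) _ (by omega)]
            omega
          · intro i hi j hj
            rw [hciff (2 + i) (by omega) (by omega) (2 + j) (by omega) (by omega)]
            omega
          · intro i hi j hj
            rw [hUadj _ (by omega) _ (by omega)]
            omega
          · intro i hi j hj
            refine iff_of_false (fun h => ?_) (by simp)
            exact hcnoP (2 + i) (by omega) (by omega) (a - j) (by omega) h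
        -- Step 2: the gap lemma
        have hgap : ∀ t, t ∈ A → a + 2 ≤ t → ∃ s, s ∈ A ∧ s + 2 ≤ t ∧ t ≤ s + n := by
          intro t htA hat
          by_contra hcon
          push_neg at hcon
          have htm : t < m := ((hAmem t).1 htA).1
          have hadjt : G.Adj (c 1) (U t) := ((hAmem t).1 htA).2
          have hA0ne : (A.filter (fun s => s < t)).Nonempty :=
            ⟨a, Finset.mem_filter.2 ⟨A.min'_mem hAne, by omega⟩⟩
          set p0 := (A.filter (fun s => s < t)).max' hA0ne with hp0def
          have hp0mem := Finset.mem_filter.1 ((A.filter (fun s => s < t)).max'_mem hA0ne)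
          have hp0A : p0 ∈ A := hp0mem.1
          have hp0t : p0 < t := hp0mem.2
          have hp0m : p0 < m := ((hAmem p0).1 hp0A).1
          have hp0adj : G.Adj (c 1) (U p0) := ((hAmem p0).1 hp0A).2
          have hp0max : ∀ s, s ∈ A → s < t → s ≤ p0 := by
            intro s hs hst
            exact Finset.le_max' (A.filter (fun s' => s' < t)) s
              (Finset.mem_filter.2 ⟨hs, hst⟩)
          by_cases hcase : p0 + 2 ≤ t
          · have hp0n : p0 + n < t := by
              have := hcon p0 hp0A hcase
              omega
            apply noF12 (G := G) (n := n) false (by simpa using hF1) (c 1) (U (p0))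
              (fun i => c (2 + i)) (fun i => U (t - i))
            · intro i hi j hj h
              have := hcne _ (by omega) (by omega) _ (by omega) (by omega) h
              omega
            · intro i hi j hj h
              have := hUinj _ (by omega) _ (by omega) h
              omega
            · intro i hi j hj h
              exact hcnotP _ (by omega) (by omega) (h ▸ hUmem _)
            · intro i hi h
              have := hcne _ (by omega) (by omega) _ (by omega) (by omega) h
              omega
            · intro i hi h
              exact hcnotP 1 (by omega) (by omega) (h ▸ hUmem _)
            · intro i hi h
              exact hcnotP _ (by omega) (by omega) (h ▸ hUmem _)
            · intro i hi h
              have := hUinj _ (by omega) _ (by omega) h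
              omega
            · intro h
              exact hcnotP 1 (by omega) (by omega) (h ▸ hUmem _)
            · exact hp0adj
            · intro i hi
              rw [hciff 1 (by omega) (by omega) (2 + i) (by omega) (by omega)]
              omega
            · intro i hi
              constructor
              · intro h
                by_contra hne
                have hmemi : t - i ∈ A := (hAmem _).2 ⟨by omega, h⟩
                have := hp0max (t - i) hmemi (by omega)
                omega
              · rintro rfl
                simpa using hadjt
            · intro i hi h
              exact hcnoP (2 + i) (by omega) (by omega) (p0) (by omega) h.symm
            · intro i hi
              rw [hUadj _ (by omega) _ (by omega)]
              omega
            · intro i hi j hj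
              rw [hciff (2 + i) (by omega) (by omega) (2 + j) (by omega) (by omega)]
              omega
            · intro i hi j hj
              rw [hUadj _ (by omega) _ (by omega)]
              omega
            · intro i hi j hj
              refine iff_of_false (fun h => ?_) (by simp)
              exact hcnoP (2 + i) (by omega) (by omega) (t - j) (by omega) h
          · have hp0t1 : p0 + 1 = t := by omega
            have hA1ne : (A.filter (fun s => s + 2 ≤ t)).Nonempty :=
              ⟨a, Finset.mem_filter.2 ⟨A.min'_mem hAne, by omega⟩⟩
            set p1 := (A.filter (fun s => s + 2 ≤ t)).max' hA1ne with hp1def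
            have hp1mem := Finset.mem_filter.1 ((A.filter (fun s => s + 2 ≤ t)).max'_mem hA1ne)
            have hp1A : p1 ∈ A := hp1mem.1
            have hp1t : p1 + 2 ≤ t := hp1mem.2
            have hp1max : ∀ s, s ∈ A → s + 2 ≤ t → s ≤ p1 := by
              intro s hs hst
              exact Finset.le_max' (A.filter (fun s' => s' + 2 ≤ t)) s
                (Finset.mem_filter.2 ⟨hs, hst⟩)
            have hp1n : p1 + n < t := by
              have := hcon p1 hp1A hp1t
              omega
            have hZadj : ∀ i < n, (G.Adj (c 1) (U (t - 1 - i)) ↔ i = 0) := by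
              intro i hi
              constructor
              · intro h
                by_contra hne
                have hmemi : t - 1 - i ∈ A := (hAmem _).2 ⟨by omega, h⟩
                have := hp1max (t - 1 - i) hmemi (by omega)
                omega
              · rintro rfl
                have e : t - 1 - 0 = p0 := by omega
                rw [e]
                exact hp0adj
            by_cases htb : t = b
            · have hkey : a + n + 2 ≤ t := by omega
              apply noF12 (G := G) (n := n) false (by simpa using hF1) (c 1) (U (a))
                (fun i => c (2 + i)) (fun i => U (t - 1 - i))
              · intro i hi j hj h
                have := hcne _ (by omega) (by omega) _ (by omega) (by omega) h
                omega
              · intro i hi j hj h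
                have := hUinj _ (by omega) _ (by omega) h
                omega
              · intro i hi j hj h
                exact hcnotP _ (by omega) (by omega) (h ▸ hUmem _)
              · intro i hi h
                have := hcne _ (by omega) (by omega) _ (by omega) (by omega) h
                omega
              · intro i hi h
                exact hcnotP 1 (by omega) (by omega) (h ▸ hUmem _)
              · intro i hi h
                exact hcnotP _ (by omega) (by omega) (h ▸ hUmem _)
              · intro i hi h
                have := hUinj _ (by omega) _ (by omega) h
                omega
              · intro h
                exact hcnotP 1 (by omega) (by omega) (h ▸ hUmem _)
              · exact hadja
              · intro i hi
                rw [hciff 1 (by omega) (by omega) (2 + i) (by omega) (by omega)]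
                omega
              · intro i hi
                exact hZadj i hi
              · intro i hi h
                exact hcnoP (2 + i) (by omega) (by omega) (a) (by omega) h.symm
              · intro i hi
                rw [hUadj _ (by omega) _ (by omega)]
                omega
              · intro i hi j hj
                rw [hciff (2 + i) (by omega) (by omega) (2 + j) (by omega) (by omega)]
                omega
              · intro i hi j hj
                rw [hUadj _ (by omega) _ (by omega)]
                omega
              · intro i hi j hj
                refine iff_of_false (fun h => ?_) (by simp)
                exact hcnoP (2 + i) (by omega) (by omega) (t - 1 - j) (by omega) h
            · have htb2 : t < b := by
                have := habnd t htm hadjt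
                omega
              apply noF12 (G := G) (n := n) false (by simpa using hF1) (c 1) (U (b))
                (fun i => c (2 + i)) (fun i => U (t - 1 - i))
              · intro i hi j hj h
                have := hcne _ (by omega) (by omega) _ (by omega) (by omega) h
                omega
              · intro i hi j hj h
                have := hUinj _ (by omega) _ (by omega) h
                omega
              · intro i hi j hj h
                exact hcnotP _ (by omega) (by omega) (h ▸ hUmem _)
              · intro i hi h
                have := hcne _ (by omega) (by omega) _ (by omega) (by omega) h
                omega
              · intro i hi h
                exact hcnotP 1 (by omega) (by omega) (h ▸ hUmem _)
              · intro i hi h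
                exact hcnotP _ (by omega) (by omega) (h ▸ hUmem _)
              · intro i hi h
                have := hUinj _ (by omega) _ (by omega) h
                omega
              · intro h
                exact hcnotP 1 (by omega) (by omega) (h ▸ hUmem _)
              · exact hadjb
              · intro i hi
                rw [hciff 1 (by omega) (by omega) (2 + i) (by omega) (by omega)]
                omega
              · intro i hi
                exact hZadj i hi
              · intro i hi h
                exact hcnoP (2 + i) (by omega) (by omega) (b) (by omega) h.symm
              · intro i hi
                rw [hUadj _ (by omega) _ (by omega)]
                omega
              · intro i hi j hj
                rw [hciff (2 + i) (by omega) (by omega) (2 + j) (by omega) (by omega)]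
                omega
              · intro i hi j hj
                rw [hUadj _ (by omega) _ (by omega)]
                omega
              · intro i hi j hj
                refine iff_of_false (fun h => ?_) (by simp)
                exact hcnoP (2 + i) (by omega) (by omega) (t - 1 - j) (by omega) h
        -- Step 3: greedy independent set
        have hgreedy : ∀ t, t ∈ A → ∃ S : Finset ℕ, (∀ s ∈ S, s ∈ A) ∧ (∀ s ∈ S, s ≤ t) ∧
            (∀ s ∈ S, ∀ r ∈ S, s ≠ r → s + 2 ≤ r ∨ r + 2 ≤ s) ∧ t + n ≤ n * S.card + a + 1 := by
          intro t
          induction t using Nat.strong_induction_on with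
          | _ t ih =>
            intro htA
            by_cases hta : t ≤ a + 1
            · refine ⟨{t}, ?_, ?_, ?_, ?_⟩
              · intro s hs
                rw [Finset.mem_singleton] at hs
                exact hs ▸ htA
              · intro s hs
                rw [Finset.mem_singleton] at hs
                omega
              · intro s hs r hr hne
                rw [Finset.mem_singleton] at hs hr
                omega
              · rw [Finset.card_singleton]
                omega
            · obtain ⟨s, hsA, hs2, hsn⟩ := hgap t htA (by omega)
              obtain ⟨S', h1, h2, h3, h4⟩ := ih s (by omega) hsA
              have htS' : t ∉ S' := fun hc => by have := h2 t hc; omega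
              refine ⟨insert t S', ?_, ?_, ?_, ?_⟩
              · intro r hr
                rcases Finset.mem_insert.1 hr with hrt | hrS
                · exact hrt ▸ htA
                · exact h1 r hrS
              · intro r hr
                rcases Finset.mem_insert.1 hr with hrt | hrS
                · omega
                · have := h2 r hrS
                  omega
              · intro r hr r' hr' hne
                rcases Finset.mem_insert.1 hr with hrt | hrS
                · rcases Finset.mem_insert.1 hr' with hrt' | hrS'
                  · omega
                  · have := h2 r' hrS'
                    omega
                · rcases Finset.mem_insert.1 hr' with hrt' | hrS'
                  · have := h2 r hrS
                    omega
                  · exact h3 r hrS r' hrS' hne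
              · rw [Finset.card_insert_of_notMem htS']
                have he : n * (S'.card + 1) = n * S'.card + n := by ring
                omega
        -- Step 4: conclude with a star
        obtain ⟨S, hS1, hS2, hS3, hS4⟩ := hgreedy b (A.max'_mem hAne)
        have hScard : n - 1 ≤ S.card := by
          by_contra hcnt
          push_neg at hcnt
          have h5 : n * S.card ≤ n * (n - 2) := Nat.mul_le_mul_left n (by omega)
          have h6 : n * (n - 2) + n * 2 = n * n := by
            rw [← Nat.mul_add]
            congr 1
            omega
          omega
        obtain ⟨S', hS'sub, hS'card⟩ := Finset.exists_subset_card_eq (s := S) (n := n - 1) hScard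
        have hS'A : ∀ s ∈ S', s ∈ A := fun s hs => hS1 s (hS'sub hs)
        have hS'm : ∀ s ∈ S', s < m := fun s hs => ((hAmem s).1 (hS'A s hs)).1
        have hc2nr : c 2 ∉ Set.range u := hcnotP 2 (by omega) (by omega)
        have hc2notim : c 2 ∉ S'.image U := by
          intro hc
          obtain ⟨s, hs, hseq⟩ := Finset.mem_image.1 hc
          exact hc2nr (hseq ▸ hUmem s)
        have himcard : (S'.image U).card = n - 1 := by
          rw [Finset.card_image_of_injOn, hS'card]
          intro s hs r hr h
          exact hUinj s (hS'm s hs) r (hS'm r hr) h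
        apply noStar (by omega) hSt (c 1) (S'.image U ∪ {c 2})
        · rw [Finset.card_union_of_disjoint (by simp [hc2notim]), himcard,
            Finset.card_singleton]
          omega
        · intro v hv
          rcases Finset.mem_union.1 hv with hv1 | hv1
          · obtain ⟨s, hs, hseq⟩ := Finset.mem_image.1 hv1
            exact hseq ▸ ((hAmem s).1 (hS'A s hs)).2
          · rw [Finset.mem_singleton] at hv1
            exact hv1 ▸ hcadj 1 (by omega) (by omega)
        · intro v hv w hw hvw
          rcases Finset.mem_union.1 hv with hv1 | hv1 <;>
            rcases Finset.mem_union.1 hw with hw1 | hw1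
          · obtain ⟨s, hs, hseq⟩ := Finset.mem_image.1 hv1
            obtain ⟨r, hr, hreq⟩ := Finset.mem_image.1 hw1
            subst hseq
            subst hreq
            have hsr : s ≠ r := fun hc => hvw (hc ▸ rfl)
            have hsp := hS3 s (hS'sub hs) r (hS'sub hr) hsr
            rw [hUadj _ (hS'm s hs) _ (hS'm r hr)]
            omega
          · obtain ⟨s, hs, hseq⟩ := Finset.mem_image.1 hv1
            rw [Finset.mem_singleton] at hw1
            subst hseq
            subst hw1
            intro h
            exact hcnoP 2 (by omega) (by omega) s (hS'm s hs) h.symm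
          · obtain ⟨s, hs, hseq⟩ := Finset.mem_image.1 hw1
            rw [Finset.mem_singleton] at hv1
            subst hseq
            subst hv1
            intro h
            exact hcnoP 2 (by omega) (by omega) s (hS'm s hs) h
          · rw [Finset.mem_singleton] at hv1 hw1
            subst hv1
            subst hw1
            exact absurd rfl hvw
      · -- b ≤ a + 1 : use the attach lemma
        refine hattach (c 1) (c 2) (hcnotP 1 (by omega) (by omega))
          (hcnotP 2 (by omega) (by omega)) (hcadj 1 (by omega) (by omega))
          (hcnoP 2 (by omega) (by omega)) a b ham hbm hadja hadjb habnd ?_ ?_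
        · omega
        · omega
    intro i hi
    have hstep : ∀ j, X (2 * n₀ + j) = ∅ := by
      intro j
      induction j with
      | zero => exact hemptyN
      | succ j ihj =>
          rw [hXdef (2 * n₀ + (j + 1)) (by omega)]
          ext w
          simp only [Set.mem_diff, Set.mem_empty_iff_false, iff_false]
          rintro ⟨⟨-, x', hx', -⟩, -⟩
          have e : 2 * n₀ + (j + 1) - 1 = 2 * n₀ + j := by omega
          rw [e, ihj] at hx'
          exact hx'
    have e : i = 2 * n₀ + (i - 2 * n₀) := by omega
    rw [e]
    exact hstep _
  -- the Y closure lemma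
  have hYcl : ∀ y ∈ Y, ∀ w, G.Adj y w → w ∈ Set.range u ∨ w ∈ Y ∨ w ∈ X 1 := by
    intro y hy w hadj
    by_cases hwP : w ∈ Set.range u
    · exact Or.inl hwP
    by_cases hwY : w ∈ Y
    · exact Or.inr (Or.inl hwY)
    by_cases hw1 : w ∈ X 1
    · exact Or.inr (Or.inr hw1)
    exfalso
    have hyP := hYnotP y hy
    have hwnoP : ∀ i, i < m → ¬ G.Adj w (U i) := hPadj w hwP hw1 hwY
    have hint : ∀ t, t < m → G.Adj y (U t) → (n₀ ≤ t ∧ t + n₀ < m) := by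
      intro t ht hadjt
      by_contra hc
      have hcond : t < n₀ ∨ m ≤ t + n₀ := by omega
      have h1 : U t ∈ X 0 := (hX0memU t ht).2 hcond
      have h2 : y ∈ nbhd G (X 0) := ⟨fun hc0 => hyP (hX0sub hc0), U t, h1, hadjt⟩
      exact hYnotN0 y hy h2
    have hne : ∃ t, t < m ∧ G.Adj y (U t) := by
      have hy' := hy
      rw [hY] at hy'
      obtain ⟨⟨-, x', hx', hadjx⟩, -⟩ := hy'
      obtain ⟨t, ht, hteq⟩ := hranU x' hx'.1
      exact ⟨t, ht, hteq ▸ hadjx⟩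
    set Ay := (Finset.range m).filter (fun t => G.Adj y (U t)) with hAydef
    have hAymem : ∀ t, t ∈ Ay ↔ (t < m ∧ G.Adj y (U t)) := by
      intro t
      simp [hAydef, Finset.mem_filter, Finset.mem_range]
    have hAyne : Ay.Nonempty := by
      obtain ⟨t, ht, hadjt⟩ := hne
      exact ⟨t, (hAymem t).2 ⟨ht, hadjt⟩⟩
    set ay := Ay.min' hAyne with haydef
    set by' := Ay.max' hAyne with hbydef
    have hayA := (hAymem ay).1 (Ay.min'_mem hAyne)
    have hbyA := (hAymem by').1 (Ay.max'_mem hAyne)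
    have hint_a := hint ay hayA.1 hayA.2
    have hint_b := hint by' hbyA.1 hbyA.2
    refine hattach y w hyP hwP hadj hwnoP ay by' hayA.1 hbyA.1 hayA.2 hbyA.2 ?_ ?_ ?_
    · intro t ht hadjt
      have htA : t ∈ Ay := (hAymem t).2 ⟨ht, hadjt⟩
      exact ⟨Ay.min'_le t htA, Ay.le_max' t htA⟩
    · omega
    · omega
  -- closure of the big set
  have hScl : ∀ v, v ∈ (Set.range u ∪ Y ∪ ⋃ i ∈ Finset.Icc 1 (2 * n₀ - 1), X i) →
      ∀ w, G.Adj v w → w ∈ (Set.range u ∪ Y ∪ ⋃ i ∈ Finset.Icc 1 (2 * n₀ - 1), X i) := by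
    have hXin : ∀ i, 1 ≤ i → i ≤ 2 * n₀ - 1 → ∀ w, w ∈ X i →
        w ∈ (Set.range u ∪ Y ∪ ⋃ i ∈ Finset.Icc 1 (2 * n₀ - 1), X i) := by
      intro i h1 h2 w hw
      apply Set.mem_union_right
      simp only [Set.mem_iUnion]
      exact ⟨i, by simp only [Finset.mem_Icc]; omega, hw⟩
    intro v hv w hadj
    by_cases hwP : w ∈ Set.range u
    · exact Or.inl (Or.inl hwP)
    by_cases hwY : w ∈ Y
    · exact Or.inl (Or.inr hwY)
    by_cases hw1 : w ∈ X 1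
    · exact hXin 1 le_rfl (by omega) w hw1
    rcases hv with (hvP | hvY) | hvX
    · exfalso
      obtain ⟨t, ht, hteq⟩ := hranU v hvP
      exact hPadj w hwP hw1 hwY t ht (hteq ▸ hadj.symm)
    · rcases hYcl v hvY w hadj with h | h | h
      · exact absurd h hwP
      · exact Or.inl (Or.inr h)
      · exact absurd h hw1
    · simp only [Set.mem_iUnion] at hvX
      obtain ⟨i, hiIcc, hvXi⟩ := hvX
      simp only [Finset.mem_Icc] at hiIcc
      by_cases hwU : w ∈ (⋃ i ∈ Finset.Icc 1 (2 * n₀ - 1), X i)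
      · exact Or.inr hwU
      exfalso
      have hwnotX : ∀ j, 1 ≤ j → j ≤ 2 * n₀ - 1 → w ∉ X j := by
        intro j hj1 hj2 hc
        apply hwU
        simp only [Set.mem_iUnion]
        exact ⟨j, by simp only [Finset.mem_Icc]; omega, hc⟩
      have hwXi1 : w ∈ X (i + 1) := by
        rw [hXdef (i + 1) (by omega)]
        have e1 : i + 1 - 1 = i := by omega
        have e2 : i + 1 - 2 = i - 1 := by omega
        rw [e1, e2]
        refine ⟨⟨fun hc => hwnotX i hiIcc.1 hiIcc.2 hc, v, hvXi, hadj.symm⟩, ?_⟩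
        rintro ((h | h) | h)
        · exact hwP h
        · exact hwY h
        · simp only [Set.mem_iUnion] at h
          obtain ⟨l, hl, hwl⟩ := h
          simp only [Finset.mem_Icc] at hl
          exact hwnotX l hl.1 (by omega) hwl
      rcases Nat.lt_or_ge (i + 1) (2 * n₀) with h | h
      · exact hwnotX (i + 1) (by omega) (by omega) hwXi1
      · have : X (i + 1) = ∅ := hempty (i + 1) (by omega)
        rw [this] at hwXi1
        exact hwXi1
  have hcov : ∀ v : V, v ∈ (Set.range u ∪ Y ∪ ⋃ i ∈ Finset.Icc 1 (2 * n₀ - 1), X i) := by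
    intro v
    have hwalk : ∀ (x y : V) (wlk : G.Walk x y),
        x ∈ (Set.range u ∪ Y ∪ ⋃ i ∈ Finset.Icc 1 (2 * n₀ - 1), X i) →
        y ∈ (Set.range u ∪ Y ∪ ⋃ i ∈ Finset.Icc 1 (2 * n₀ - 1), X i) := by
      intro x y wlk
      induction wlk with
      | nil => exact id
      | cons hadj tail ih => exact fun hx => ih (hScl _ hx _ hadj)
    obtain ⟨wlk⟩ := hconn (u ⟨0, hm⟩) v
    exact hwalk _ _ wlk (Or.inl (Or.inl ⟨_, rfl⟩))
  refine ⟨Set.eq_univ_iff_forall.2 hcov, ?_, ?_, ?_, ?_, hempty⟩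
  · rw [Set.disjoint_right]
    intro y hy
    exact hYnotP y hy
  · intro i hi
    simp only [Finset.mem_Icc] at hi
    rw [Set.disjoint_right]
    intro v hv
    exact hXnotP i hi.1 v hv
  · intro i hi
    simp only [Finset.mem_Icc] at hi
    rw [Set.disjoint_left]
    intro v hv hvX
    exact hXnotY i hi.1 v hvX hv
  · intro i hi j hj hij
    simp only [Finset.mem_Icc] at hi hj
    rw [Set.disjoint_left]
    intro v hvi hvj
    rcases Nat.lt_or_ge i j with h | h
    · exact hXdisj i hi.1 j h v hvi hvj
    · exact hXdisj j hj.1 i (by omega) v hvj hvi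
end

section
/- Let n ≥ 3, let G be a connected {K*_n, K_{1,n}, F^(1)_n, F^(2)_n}-free graph, let n₀ = max{⌈(n²−n−2)/2⌉, n}, let P = u_1 u_2 ⋯ u_m be a longest induced path of G, and define X₀ = {u_i : 1 ≤ i ≤ n₀ or m−n₀+1 ≤ i ≤ m}, Y = N_G(V(P) \ X₀) \ (X₀ ∪ N_G(X₀)), X₁ = N_G(X₀) \ V(P), and for i ≥ 2, X_i = N_G(X_{i−1}) \ (V(P) ∪ Y ∪ ⋃_{1 ≤ j ≤ i−2} X_j). Define α₀ = 2⌈n₀/2⌉ and α_i = (n−1)·R(n, α_{i−1}+1) − 1 for i ≥ 1, where R denotes the Ramsey number. Then for every integer i ≥ 0, the independence number of the subgraph of G induced by X_i satisfies α(G[X_i]) ≤ α_i. -/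
open Finset

theorem my_ramsey_exists : ∀ (N a b : ℕ), a + b ≤ N →
    ∃ R : ℕ, ∀ (V : Type) (G : SimpleGraph V) (W : Finset V), R ≤ W.card →
      (∃ s : Finset V, ↑s ⊆ (↑W : Set V) ∧ G.IsNClique a s) ∨
      (∃ s : Finset V, ↑s ⊆ (↑W : Set V) ∧ Gᶜ.IsNClique b s) := by
  intro N
  induction N with
  | zero =>
      intro a b hab
      refine ⟨0, fun V G W _ => ?_⟩
      have ha : a = 0 := by omega
      subst ha
      exact Or.inl ⟨∅, by simp, by simp [SimpleGraph.isNClique_empty]⟩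
  | succ N ih =>
      intro a b hab
      match a, b with
      | 0, b =>
          refine ⟨0, fun V G W _ => ?_⟩
          exact Or.inl ⟨∅, by simp, by simp [SimpleGraph.isNClique_empty]⟩
      | a+1, 0 =>
          refine ⟨0, fun V G W _ => ?_⟩
          exact Or.inr ⟨∅, by simp, by simp [SimpleGraph.isNClique_empty]⟩
      | a+1, b+1 =>
          obtain ⟨R₁, hR₁⟩ := ih a (b+1) (by omega)
          obtain ⟨R₂, hR₂⟩ := ih (a+1) b (by omega)
          refine ⟨R₁ + R₂ + 1, fun V G W hW => ?_⟩
          classical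
          have hWpos : 0 < W.card := by omega
          obtain ⟨v, hv⟩ := Finset.card_pos.mp hWpos
          set Nb := (W.erase v).filter (fun w => G.Adj v w) with hNb
          set Mb := (W.erase v).filter (fun w => ¬ G.Adj v w) with hMb
          have hsplit : Nb.card + Mb.card = W.card - 1 := by
            have h1 : Nb.card + Mb.card = (W.erase v).card := by
              rw [hNb, hMb]
              exact Finset.card_filter_add_card_filter_not (p := fun w => G.Adj v w)
            rw [h1, Finset.card_erase_of_mem hv]
          have hcase : R₁ ≤ Nb.card ∨ R₂ ≤ Mb.card := by omega
          rcases hcase with hc | hc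
          · rcases hR₁ V G Nb hc with ⟨s, hs, hcl⟩ | ⟨s, hs, hcl⟩
            · -- extend clique with v
              have hvs : v ∉ s := by
                intro hmem
                have := hs hmem
                simp only [hNb, Finset.coe_filter, Set.mem_setOf_eq, Finset.mem_erase] at this
                exact this.1.1 rfl
              refine Or.inl ⟨insert v s, ?_, ?_⟩
              · intro x hx
                simp only [Finset.coe_insert, Set.mem_insert_iff] at hx
                rcases hx with rfl | hx
                · exact hv
                · have := hs hx
                  simp only [hNb, Finset.coe_filter, Set.mem_setOf_eq, Finset.mem_erase] at this
                  exact this.1.2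
              · refine hcl.insert ?_
                intro w hw
                have := hs hw
                simp only [hNb, Finset.coe_filter, Set.mem_setOf_eq, Finset.mem_erase] at this
                exact this.2
            · refine Or.inr ⟨s, ?_, hcl⟩
              intro x hx
              have := hs hx
              simp only [hNb, Finset.coe_filter, Set.mem_setOf_eq, Finset.mem_erase] at this
              exact this.1.2
          · rcases hR₂ V G Mb hc with ⟨s, hs, hcl⟩ | ⟨s, hs, hcl⟩
            · refine Or.inl ⟨s, ?_, hcl⟩
              intro x hx
              have := hs hx
              simp only [hMb, Finset.coe_filter, Set.mem_setOf_eq, Finset.mem_erase] at this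
              exact this.1.2
            · have hvs : v ∉ s := by
                intro hmem
                have := hs hmem
                simp only [hMb, Finset.coe_filter, Set.mem_setOf_eq, Finset.mem_erase] at this
                exact this.1.1 rfl
              refine Or.inr ⟨insert v s, ?_, ?_⟩
              · intro x hx
                simp only [Finset.coe_insert, Set.mem_insert_iff] at hx
                rcases hx with rfl | hx
                · exact hv
                · have := hs hx
                  simp only [hMb, Finset.coe_filter, Set.mem_setOf_eq, Finset.mem_erase] at this
                  exact this.1.2
              · refine hcl.insert ?_
                intro w hw
                have := hs hw
                simp only [hMb, Finset.coe_filter, Set.mem_setOf_eq, Finset.mem_erase] at this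
                rw [SimpleGraph.compl_adj]
                exact ⟨Ne.symm this.1.1, this.2⟩

theorem ramseyNumber_mem (p q : ℕ) : ∀ m, ramseyNumber p q ≤ m → ∀ G : SimpleGraph (Fin m),
    (∃ s : Finset (Fin m), G.IsNClique p s) ∨ (∃ s : Finset (Fin m), Gᶜ.IsNClique q s) := by
  obtain ⟨R, hR⟩ := my_ramsey_exists (p + q) p q le_rfl
  have hne : {R | ∀ m : ℕ, R ≤ m → ∀ G : SimpleGraph (Fin m),
      (∃ s : Finset (Fin m), G.IsNClique p s) ∨ (∃ s : Finset (Fin m), Gᶜ.IsNClique q s)}.Nonempty := by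
    refine ⟨R, fun m hm G => ?_⟩
    have hcard : R ≤ (Finset.univ : Finset (Fin m)).card := by
      simpa using hm
    rcases hR (Fin m) G Finset.univ hcard with ⟨s, _, h⟩ | ⟨s, _, h⟩
    · exact Or.inl ⟨s, h⟩
    · exact Or.inr ⟨s, h⟩
  exact Nat.sInf_mem hne

theorem ramsey_applied {V : Type} (G : SimpleGraph V) (p q : ℕ) (T : Finset V)
    (h : ramseyNumber p q ≤ T.card) :
    (∃ C : Finset V, ↑C ⊆ (↑T : Set V) ∧ G.IsNClique p C) ∨
    (∃ I : Finset V, ↑I ⊆ (↑T : Set V) ∧ I.card = q ∧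
      ∀ a ∈ I, ∀ b ∈ I, a ≠ b → ¬ G.Adj a b) := by
  classical
  set m := T.card with hm
  let e : Fin m ≃ ↥T := (Fintype.equivFinOfCardEq (Fintype.card_coe T)).symm
  let f : Fin m → V := fun i => ((e i : ↥T) : V)
  have hf : Function.Injective f := fun i j hij => e.injective (Subtype.ext hij)
  have hfT : ∀ i, f i ∈ T := fun i => (e i).2
  rcases ramseyNumber_mem p q m (by rw [hm]; exact h) (G.comap f) with ⟨s, hs⟩ | ⟨s, hs⟩
  · left
    refine ⟨s.image f, ?_, ?_, ?_⟩
    · intro x hx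
      simp only [coe_image, Set.mem_image, mem_coe] at hx
      obtain ⟨i, _, rfl⟩ := hx
      exact hfT i
    · intro x hx y hy hxy
      simp only [coe_image, Set.mem_image, mem_coe] at hx hy
      obtain ⟨i, hi, rfl⟩ := hx
      obtain ⟨j, hj, rfl⟩ := hy
      have hij : i ≠ j := fun hij => hxy (by rw [hij])
      exact hs.1 hi hj hij
    · rw [Finset.card_image_of_injective _ hf, hs.2]
  · right
    refine ⟨s.image f, ?_, ?_, ?_⟩
    · intro x hx
      simp only [coe_image, Set.mem_image, mem_coe] at hx
      obtain ⟨i, _, rfl⟩ := hx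
      exact hfT i
    · rw [Finset.card_image_of_injective _ hf, hs.2]
    · intro x hx y hy hxy
      simp only [mem_image] at hx hy
      obtain ⟨i, hi, rfl⟩ := hx
      obtain ⟨j, hj, rfl⟩ := hy
      have hij : i ≠ j := fun hij => hxy (by rw [hij])
      have := hs.1 hi hj hij
      rw [SimpleGraph.compl_adj] at this
      exact this.2

open scoped Classical in
theorem star_bound {V : Type} (n : ℕ) (hn : 1 ≤ n) (G : SimpleGraph V)
    (hSt : ¬ HasInducedCopyG (StarG n) G) (S : Finset V)
    (hind : ∀ a ∈ S, ∀ b ∈ S, a ≠ b → ¬ G.Adj a b) (t : V) :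
    (S.filter (fun v => G.Adj t v)).card ≤ n - 1 := by
  classical
  by_contra hcon
  push_neg at hcon
  have hle : n ≤ (S.filter (fun v => G.Adj t v)).card := by omega
  obtain ⟨u, hu_sub, hu_card⟩ := Finset.exists_subset_card_eq hle
  have ecard : Fintype.card ↥u = n := by rw [Fintype.card_coe, hu_card]
  let e : ↥u ≃ Fin n := Fintype.equivFinOfCardEq ecard
  let w : Fin n → V := fun j => ((e.symm j : ↥u) : V)
  have hw_inj : Function.Injective w := fun i j hij => e.symm.injective (Subtype.ext hij)
  have hw_mem : ∀ j, w j ∈ S ∧ G.Adj t (w j) := by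
    intro j
    have := hu_sub (e.symm j).2
    simp only [Finset.mem_filter] at this
    exact this
  apply hSt
  refine ⟨Sum.elim (fun _ => t) w, ?_, ?_⟩
  · intro x y hxy
    match x, y with
    | Sum.inl a, Sum.inl b => simp
    | Sum.inl a, Sum.inr j =>
        simp only [Sum.elim_inl, Sum.elim_inr] at hxy
        exact absurd hxy (G.ne_of_adj (hw_mem j).2)
    | Sum.inr j, Sum.inl a =>
        simp only [Sum.elim_inl, Sum.elim_inr] at hxy
        exact absurd hxy (G.ne_of_adj (hw_mem j).2).symm
    | Sum.inr i, Sum.inr j =>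
        simp only [Sum.elim_inr] at hxy
        rw [hw_inj hxy]
  · intro x y
    match x, y with
    | Sum.inl a, Sum.inl b =>
        simp [StarG, SimpleGraph.fromRel_adj]
    | Sum.inl a, Sum.inr j =>
        simp only [Sum.elim_inl, Sum.elim_inr]
        have : (StarG n).Adj (Sum.inl a) (Sum.inr j) := by
          rw [StarG, SimpleGraph.fromRel_adj]
          exact ⟨by simp, Or.inl trivial⟩
        exact iff_of_true (hw_mem j).2 this
    | Sum.inr j, Sum.inl a =>
        simp only [Sum.elim_inl, Sum.elim_inr]
        have : (StarG n).Adj (Sum.inr j) (Sum.inl a) := by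
          rw [StarG, SimpleGraph.fromRel_adj]
          exact ⟨by simp, Or.inr trivial⟩
        exact iff_of_true ((hw_mem j).2.symm) this
    | Sum.inr i, Sum.inr j =>
        simp only [Sum.elim_inr]
        rw [StarG, SimpleGraph.fromRel_adj]
        constructor
        · intro hadj
          by_cases hij : i = j
          · subst hij; exact absurd hadj (G.irrefl)
          · exact absurd hadj (hind _ (hw_mem i).1 _ (hw_mem j).1
              (fun hh => hij (hw_inj hh)))
        · rintro ⟨-, h | h⟩ <;> exact h.elim

theorem indepNumOn_le_of {V : Type} [Fintype V] (G : SimpleGraph V) (X : Set V) (K : ℕ)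
    (h : ∀ s : Finset V, ↑s ⊆ X → (∀ a ∈ s, ∀ b ∈ s, a ≠ b → ¬ G.Adj a b) → s.card ≤ K) :
    indepNumOn G X ≤ K := by
  apply csSup_le
  · exact ⟨0, ∅, by simp⟩
  · rintro k ⟨s, h1, h2, h3⟩
    rw [← h2]
    exact h s h1 h3

theorem le_indepNumOn_of {V : Type} [Fintype V] (G : SimpleGraph V) (X : Set V) (s : Finset V)
    (h1 : ↑s ⊆ X) (h3 : ∀ a ∈ s, ∀ b ∈ s, a ≠ b → ¬ G.Adj a b) :
    s.card ≤ indepNumOn G X := by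
  apply le_csSup
  · refine ⟨Fintype.card V, ?_⟩
    rintro k ⟨s', _, h2, _⟩
    rw [← h2, ← Finset.card_univ]
    exact Finset.card_le_univ s'
  · exact ⟨s, h1, rfl, h3⟩

open scoped Classical in
theorem step_lemma {V : Type} [Fintype V] (n : ℕ) (hn : 3 ≤ n) (G : SimpleGraph V)
    (hKs : ¬ HasInducedCopyG (KStarG n) G) (hSt : ¬ HasInducedCopyG (StarG n) G)
    (A B : Set V) (hnb : ∀ v ∈ B, v ∉ A ∧ ∃ t ∈ A, G.Adj t v)
    (aA : ℕ) (hA : indepNumOn G A ≤ aA) :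
    indepNumOn G B ≤ (n - 1) * ramseyNumber n (aA + 1) - 1 := by
  set R := ramseyNumber n (aA + 1) with hR
  apply indepNumOn_le_of
  intro S hSsub hSind
  by_contra hbig
  push_neg at hbig
  have hScard : (n - 1) * R ≤ S.card := by omega
  set 𝒯 : Finset V → Prop := fun T => ↑T ⊆ A ∧ ∀ v ∈ S, ∃ t ∈ T, G.Adj t v with h𝒯
  have hg : ∀ v : V, v ∈ S → ∃ t, t ∈ A ∧ G.Adj t v := fun v hv => (hnb v (hSsub hv)).2
  set T₀ : Finset V :=
    S.attach.image (fun v => if h : ∃ t, t ∈ A ∧ G.Adj t v.1 then h.choose else v.1) with hT₀def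
  have hT₀ : 𝒯 T₀ := by
    constructor
    · intro x hx
      simp only [hT₀def, Finset.coe_image, Set.mem_image, Finset.mem_coe,
        Finset.mem_attach] at hx
      obtain ⟨v, -, rfl⟩ := hx
      have hex := hg v.1 v.2
      rw [dif_pos hex]
      exact hex.choose_spec.1
    · intro v hv
      have hex := hg v hv
      refine ⟨hex.choose, ?_, hex.choose_spec.2⟩
      rw [hT₀def, Finset.mem_image]
      refine ⟨⟨v, hv⟩, Finset.mem_attach _ _, ?_⟩
      rw [dif_pos hex]
  have hcovne : {k | ∃ T, 𝒯 T ∧ T.card = k}.Nonempty := ⟨T₀.card, T₀, hT₀, rfl⟩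
  obtain ⟨T, hT, hTcard⟩ := Nat.sInf_mem hcovne
  have hmin : ∀ T', 𝒯 T' → T.card ≤ T'.card := by
    intro T' h'
    rw [hTcard]
    exact Nat.sInf_le ⟨T', h', rfl⟩
  have hpriv : ∀ t ∈ T, ∃ s₀, s₀ ∈ S ∧ G.Adj t s₀ ∧ ∀ t' ∈ T, t' ≠ t → ¬ G.Adj t' s₀ := by
    intro t ht
    by_contra hno
    push_neg at hno
    have hcov' : 𝒯 (T.erase t) := by
      constructor
      · intro x hx
        apply hT.1
        simp only [Finset.coe_erase, Set.mem_diff] at hx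
        exact hx.1
      · intro v hv
        obtain ⟨t'', ht'', hadj⟩ := hT.2 v hv
        by_cases he : t'' = t
        · subst he
          obtain ⟨t', ht', hne, hadj'⟩ := hno v hv hadj
          exact ⟨t', Finset.mem_erase.mpr ⟨hne, ht'⟩, hadj'⟩
        · exact ⟨t'', Finset.mem_erase.mpr ⟨he, ht''⟩, hadj⟩
    have hle := hmin _ hcov'
    have hec := Finset.card_erase_of_mem ht
    have hpos : 0 < T.card := Finset.card_pos.mpr ⟨t, ht⟩
    omega
  set w : V → V := fun t =>
    if h : ∃ s₀, s₀ ∈ S ∧ G.Adj t s₀ ∧ ∀ t' ∈ T, t' ≠ t → ¬ G.Adj t' s₀ then h.choose else t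
    with hwdef
  have hw : ∀ t, t ∈ T → w t ∈ S ∧ G.Adj t (w t) ∧ ∀ t' ∈ T, t' ≠ t → ¬ G.Adj t' (w t) := by
    intro t ht
    have hex := hpriv t ht
    rw [hwdef]
    simp only [dif_pos hex]
    exact hex.choose_spec
  have hcount : S.card ≤ (n - 1) * T.card := by
    have hsub2 : S ⊆ T.biUnion (fun t => S.filter (fun v => G.Adj t v)) := by
      intro v hv
      obtain ⟨t, ht, hadj⟩ := hT.2 v hv
      exact Finset.mem_biUnion.mpr ⟨t, ht, Finset.mem_filter.mpr ⟨hv, hadj⟩⟩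
    calc S.card ≤ (T.biUnion (fun t => S.filter (fun v => G.Adj t v))).card :=
          Finset.card_le_card hsub2
      _ ≤ ∑ t ∈ T, (S.filter (fun v => G.Adj t v)).card := Finset.card_biUnion_le
      _ ≤ ∑ _t ∈ T, (n - 1) :=
          Finset.sum_le_sum (fun t _ => star_bound n (by omega) G hSt S hSind t)
      _ = T.card * (n - 1) := by rw [Finset.sum_const, smul_eq_mul]
      _ = (n - 1) * T.card := mul_comm _ _
  have hTR : R ≤ T.card := by
    have hpos : 0 < n - 1 := by omega
    exact Nat.le_of_mul_le_mul_left (le_trans hScard hcount) hpos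
  rcases ramsey_applied G n (aA + 1) T hTR with ⟨C, hCsub, hCclq⟩ | ⟨I, hIsub, hIcard, hIind⟩
  · -- clique case: build induced K*_n
    have hCcard : Fintype.card ↥C = n := by rw [Fintype.card_coe]; exact hCclq.2
    let e : Fin n ≃ ↥C := (Fintype.equivFinOfCardEq hCcard).symm
    let tt : Fin n → V := fun j => ((e j : ↥C) : V)
    have htt_inj : Function.Injective tt := fun i j hij => e.injective (Subtype.ext hij)
    have htt_C : ∀ j, tt j ∈ C := fun j => (e j).2
    have htt_T : ∀ j, tt j ∈ T := fun j => Finset.mem_coe.mp (hCsub (htt_C j))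
    have htt_adj : ∀ i j, i ≠ j → G.Adj (tt i) (tt j) := by
      intro i j hij
      exact hCclq.1 (htt_C i) (htt_C j) (fun hh => hij (htt_inj hh))
    let ss : Fin n → V := fun j => w (tt j)
    have hss : ∀ j, ss j ∈ S ∧ G.Adj (tt j) (ss j) ∧
        ∀ t' ∈ T, t' ≠ tt j → ¬ G.Adj t' (ss j) := fun j => hw (tt j) (htt_T j)
    have hss_inj : Function.Injective ss := by
      intro i j hij
      by_contra hne
      have h1 := (hss i).2.1
      have h2 := (hss j).2.2 (tt i) (htt_T i) (fun hh => hne (htt_inj hh))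
      rw [← hij] at h2
      exact h2 h1
    have hSA : ∀ v ∈ S, v ∉ A := fun v hv => (hnb v (hSsub hv)).1
    have hcross : ∀ i j, tt i ≠ ss j := by
      intro i j heq
      apply hSA (ss j) (hss j).1
      rw [← heq]
      exact hT.1 (htt_T i)
    apply hKs
    refine ⟨Sum.elim tt ss, ?_, ?_⟩
    · intro x y hxy
      rcases x with i | i <;> rcases y with j | j
      · simp only [Sum.elim_inl] at hxy
        rw [htt_inj hxy]
      · simp only [Sum.elim_inl, Sum.elim_inr] at hxy
        exact absurd hxy (hcross i j)
      · simp only [Sum.elim_inl, Sum.elim_inr] at hxy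
        exact absurd hxy.symm (hcross j i)
      · simp only [Sum.elim_inr] at hxy
        rw [hss_inj hxy]
    · intro x y
      match x, y with
      | Sum.inl i, Sum.inl j =>
          simp only [Sum.elim_inl]
          rw [KStarG, SimpleGraph.fromRel_adj]
          constructor
          · intro hadj
            have hij : i ≠ j := by
              intro hh; subst hh; exact G.irrefl hadj
            exact ⟨by simp [hij], Or.inl hij⟩
          · rintro ⟨hne, h | h⟩
            · exact htt_adj i j h
            · exact htt_adj i j (Ne.symm h)
      | Sum.inl i, Sum.inr j =>
          simp only [Sum.elim_inl, Sum.elim_inr]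
          rw [KStarG, SimpleGraph.fromRel_adj]
          constructor
          · intro hadj
            refine ⟨by simp, Or.inl ?_⟩
            by_contra hij
            exact (hss j).2.2 (tt i) (htt_T i)
              (fun hh => hij (htt_inj hh)) hadj
          · rintro ⟨hne, h | h⟩
            · subst h; exact (hss i).2.1
            · exact h.elim
      | Sum.inr i, Sum.inl j =>
          simp only [Sum.elim_inl, Sum.elim_inr]
          rw [KStarG, SimpleGraph.fromRel_adj]
          constructor
          · intro hadj
            refine ⟨by simp, Or.inr ?_⟩
            show j = i
            by_contra hij
            exact (hss i).2.2 (tt j) (htt_T j)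
              (fun hh => hij (htt_inj hh)) hadj.symm
          · rintro ⟨hne, h | h⟩
            · exact h.elim
            · have hji : j = i := h
              subst hji
              exact (hss j).2.1.symm
      | Sum.inr i, Sum.inr j =>
          simp only [Sum.elim_inr]
          rw [KStarG, SimpleGraph.fromRel_adj]
          constructor
          · intro hadj
            by_cases hij : i = j
            · subst hij; exact absurd hadj (G.irrefl)
            · exact absurd hadj (hSind _ (hss i).1 _ (hss j).1
                (fun hh => hij (hss_inj hh)))
          · rintro ⟨-, h | h⟩ <;> exact h.elim
  · -- independent case: contradicts indepNumOn G A ≤ aA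
    have hIA : (↑I : Set V) ⊆ A := fun x hx => hT.1 (hIsub hx)
    have := le_indepNumOn_of G A I hIA hIind
    omega

theorem nonconsec_card (I : Finset ℕ) (lo L : ℕ) (hmem : ∀ x ∈ I, lo ≤ x ∧ x < lo + L)
    (hnc : ∀ x ∈ I, x + 1 ∉ I) : I.card ≤ (L + 1) / 2 := by
  classical
  have : I.card ≤ (Finset.range ((L + 1) / 2)).card := by
    apply Finset.card_le_card_of_injOn (fun x => (x - lo) / 2)
    · intro x hx
      have := hmem x hx
      simp only [Finset.coe_range, Set.mem_Iio, Finset.mem_range, Finset.mem_coe]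
      omega
    · intro x hx y hy hxy
      simp only at hxy
      have hx' := hmem x hx
      have hy' := hmem y hy
      by_contra hne
      rcases Nat.lt_or_ge x y with h | h
      · have : y = x + 1 := by omega
        exact hnc x hx (this ▸ hy)
      · have hlt : y < x := by omega
        have : x = y + 1 := by omega
        exact hnc y hy (this ▸ hx)
    
  simpa using this

theorem twoblock_card (J : Finset ℕ) (m n₀ : ℕ)
    (hmem : ∀ x ∈ J, x < m ∧ (x < n₀ ∨ m ≤ x + n₀))
    (hnc : ∀ x ∈ J, x + 1 ∉ J) : J.card ≤ 2 * ((n₀ + 1) / 2) := by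
  classical
  have hsplit : (J.filter (fun x => x < n₀)).card + (J.filter (fun x => ¬ x < n₀)).card
      = J.card := Finset.card_filter_add_card_filter_not (p := fun x => x < n₀)
  have hb1 : (J.filter (fun x => x < n₀)).card ≤ (n₀ + 1) / 2 := by
    apply nonconsec_card _ 0 n₀
    · intro x hx
      simp only [Finset.mem_filter] at hx
      omega
    · intro x hx hx1
      simp only [Finset.mem_filter] at hx hx1
      exact hnc x hx.1 hx1.1
  have hb2 : (J.filter (fun x => ¬ x < n₀)).card ≤ (n₀ + 1) / 2 := by
    have h2 : (J.filter (fun x => ¬ x < n₀)).card ≤ (m - max n₀ (m - n₀) + 1) / 2 := by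
      apply nonconsec_card _ (max n₀ (m - n₀)) (m - max n₀ (m - n₀))
      · intro x hx
        simp only [Finset.mem_filter] at hx
        have := hmem x hx.1
        have hxn := hx.2
        omega
      · intro x hx hx1
        simp only [Finset.mem_filter] at hx hx1
        exact hnc x hx.1 hx1.1
    have h3 : (m - max n₀ (m - n₀) + 1) / 2 ≤ (n₀ + 1) / 2 := by
      apply Nat.div_le_div_right
      omega
    omega
  omega
/-- Chiba–Furuya, Lemma 2.7. With the setup of Lemma 2.6 and
`α₀ = 2⌈n₀/2⌉`, `α_i = (n−1)·R(n, α_{i−1}+1) − 1`, the independence number of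
`G[X_i]` is at most `α_i` for every `i ≥ 0`.  (Indices of `P` are 0-based.) -/
theorem indepNum_of_layers_bounded (n : ℕ) (hn : 3 ≤ n)
    (V : Type) [Fintype V] (G : SimpleGraph V) (hconn : G.Connected)
    (hKs : ¬ HasInducedCopyG (KStarG n) G)
    (hSt : ¬ HasInducedCopyG (StarG n) G)
    (hF1 : ¬ HasInducedCopyG (F1G n) G)
    (hF2 : ¬ HasInducedCopyG (F2G n) G)
    (n₀ : ℕ) (hn₀ : n₀ = max ((n ^ 2 - n - 1) / 2) n)
    (m : ℕ) (u : Fin m → V) (hu : IsInducedPathEmb G u)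
    (hlong : ∀ (m' : ℕ) (u' : Fin m' → V), IsInducedPathEmb G u' → m' ≤ m)
    (X : ℕ → Set V) (Y : Set V)
    (hX0 : X 0 = {x | ∃ i : Fin m, x = u i ∧ (i.val < n₀ ∨ m ≤ i.val + n₀)})
    (hY : Y = nbhd G (Set.range u \ X 0) \ (X 0 ∪ nbhd G (X 0)))
    (hX1 : X 1 = nbhd G (X 0) \ Set.range u)
    (hXs : ∀ i : ℕ, X (i + 2) =
      nbhd G (X (i + 1)) \ (Set.range u ∪ Y ∪ ⋃ j ∈ Finset.Icc 1 i, X j))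
    (a : ℕ → ℕ) (ha0 : a 0 = 2 * ((n₀ + 1) / 2))
    (haS : ∀ i : ℕ, a (i + 1) = (n - 1) * ramseyNumber n (a i + 1) - 1) :
    ∀ i : ℕ, indepNumOn G (X i) ≤ a i := by

  classical
  have hnbhd : ∀ i : ℕ, ∀ v ∈ X (i + 1), v ∉ X i ∧ ∃ t ∈ X i, G.Adj t v := by
    intro i v hv
    match i with
    | 0 =>
        rw [hX1] at hv
        obtain ⟨⟨hnot, x, hx, hadj⟩, -⟩ := hv
        exact ⟨hnot, x, hx, hadj.symm⟩
    | i + 1 =>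
        rw [hXs i] at hv
        obtain ⟨⟨hnot, x, hx, hadj⟩, -⟩ := hv
        exact ⟨hnot, x, hx, hadj.symm⟩
  intro i
  induction i with
  | zero =>
      rw [ha0]
      apply indepNumOn_le_of
      intro S hsub hind
      have hSeq : (Finset.univ.filter (fun i : Fin m => u i ∈ S)).image u = S := by
        ext v
        constructor
        · intro hv
          obtain ⟨i, hi, rfl⟩ := Finset.mem_image.mp hv
          exact (Finset.mem_filter.mp hi).2
        · intro hv
          have hvX := hsub hv
          rw [hX0] at hvX
          obtain ⟨i, rfl, hcond⟩ := hvX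
          exact Finset.mem_image.mpr ⟨i, Finset.mem_filter.mpr ⟨Finset.mem_univ i, hv⟩, rfl⟩
      have hcard2 : S.card = (Finset.univ.filter (fun i : Fin m => u i ∈ S)).card := by
        have h := Finset.card_image_of_injective
          (Finset.univ.filter (fun i : Fin m => u i ∈ S)) hu.1
        rw [hSeq] at h
        exact h
      have hcard3 :
          ((Finset.univ.filter (fun i : Fin m => u i ∈ S)).image (fun i : Fin m => (i : ℕ))).card
          = (Finset.univ.filter (fun i : Fin m => u i ∈ S)).card :=
        Finset.card_image_of_injective _ Fin.val_injective
      have hfin : S.card ≤ 2 * ((n₀ + 1) / 2) := by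
        rw [hcard2, ← hcard3]
        apply twoblock_card _ m n₀
        · intro x hx
          obtain ⟨i, hi, rfl⟩ := Finset.mem_image.mp hx
          have hiS := (Finset.mem_filter.mp hi).2
          have hvX := hsub hiS
          rw [hX0] at hvX
          obtain ⟨i', heq, hcond⟩ := hvX
          have hii : i = i' := hu.1 heq
          subst hii
          exact ⟨i.isLt, hcond⟩
        · intro x hx hx1
          obtain ⟨i, hi, hival⟩ := Finset.mem_image.mp hx
          obtain ⟨i', hi', hival'⟩ := Finset.mem_image.mp hx1
          have hiS := (Finset.mem_filter.mp hi).2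
          have hiS' := (Finset.mem_filter.mp hi').2
          have hadj : G.Adj (u i) (u i') := (hu.2 i i').mpr (Or.inl (by omega))
          have hne : u i ≠ u i' := by
            intro hh
            have := hu.1 hh
            subst this
            omega
          exact hind _ hiS _ hiS' hne hadj
      exact hfin
  | succ i ih =>
      rw [haS i]
      exact step_lemma n hn G hKs hSt (X i) (X (i + 1)) (hnbhd i) (a i) ih
end
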